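/- arXiv:2501.17832 — 3 statements merged into one kernel-verified Lean document; each statement's English description precedes it below -/
import Mathlib

section
/- Let G be a unimodular locally compact group with Haar measure, and let (π, H) be an irreducible unitary representation of G that is square-integrable with formal degree d(π) > 0. Then for all h, h', v, v' ∈ H, the matrix coefficients c_{h,h'}(g) = ⟨π(g)h, h'⟩ and c_{v,v'}(g) = ⟨π(g)v, v'⟩ satisfy ⟨c_{h,h'}, c_{v,v'}⟩_{L²(G)} = (1/d(π)) ⟨h, v⟩ ⟨v', h'⟩ (Schur orthogonality relations). -/
open MeasureTheory ComplexConjugate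

namespace SchurOrthAux

noncomputable section

variable {H : Type*} [NormedAddCommGroup H] [InnerProductSpace ℂ H] [CompleteSpace H]

local notation "⟪" x ", " y "⟫" => @inner ℂ _ _ x y

/-- Coercion of a linear isometry equivalence to a continuous linear map. -/
def cl (u : H ≃ₗᵢ[ℂ] H) : H →L[ℂ] H := u.toLinearIsometry.toContinuousLinearMap

@[simp] lemma cl_apply (u : H ≃ₗᵢ[ℂ] H) (x : H) : cl u x = u x := rfl

lemma cl_mul_symm (u : H ≃ₗᵢ[ℂ] H) : cl u * cl u.symm = 1 := by
  ext x; simp [ContinuousLinearMap.mul_apply]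

lemma cl_symm_mul (u : H ≃ₗᵢ[ℂ] H) : cl u.symm * cl u = 1 := by
  ext x; simp [ContinuousLinearMap.mul_apply]

lemma star_cl (u : H ≃ₗᵢ[ℂ] H) : star (cl u) = cl u.symm := by
  rw [ContinuousLinearMap.star_eq_adjoint]
  symm
  rw [ContinuousLinearMap.eq_adjoint_iff]
  intro x y
  rw [cl_apply, cl_apply, ← u.inner_map_map (u.symm x) y, u.apply_symm_apply]

/-- Conjugation by a unitary as a star algebra homomorphism over ℝ. -/
def conjSAH (u : H ≃ₗᵢ[ℂ] H) : (H →L[ℂ] H) →⋆ₐ[ℝ] (H →L[ℂ] H) where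
  toFun B := cl u * B * cl u.symm
  map_one' := by show cl u * 1 * cl u.symm = 1; rw [mul_one, cl_mul_symm]
  map_mul' B C := by
    ext x
    simp [ContinuousLinearMap.mul_apply]
  map_zero' := by simp
  map_add' B C := by
    ext x
    simp [ContinuousLinearMap.mul_apply]
  commutes' r := by
    ext x
    simp [Algebra.algebraMap_eq_smul_one, ContinuousLinearMap.mul_apply,
      ContinuousLinearMap.smul_apply, _root_.map_smul]
  map_star' B := by
    show cl u * star B * cl u.symm = star (cl u * B * cl u.symm)
    rw [star_mul, star_mul, star_cl, star_cl, u.symm_symm, mul_assoc]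

lemma conjSAH_apply (u : H ≃ₗᵢ[ℂ] H) (B : H →L[ℂ] H) :
    conjSAH u B = cl u * B * cl u.symm := rfl

lemma commute_cfc (u : H ≃ₗᵢ[ℂ] H) {A : H →L[ℂ] H} (hA : IsSelfAdjoint A)
    (hu : cl u * A = A * cl u) (f : ℝ → ℝ) (hf : Continuous f) :
    cl u * cfc f A = cfc f A * cl u := by
  have h1 : cfcHom hA = (conjSAH u).comp (cfcHom hA) := by
    apply cfcHom_eq_of_continuous_of_map_id
    · have hcont : Continuous fun B : H →L[ℂ] H => cl u * B * cl u.symm :=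
        (continuous_const.mul continuous_id).mul continuous_const
      exact hcont.comp (cfcHom_isClosedEmbedding hA).continuous
    · rw [StarAlgHom.comp_apply, cfcHom_id hA, conjSAH_apply]
      rw [hu, mul_assoc, cl_mul_symm, mul_one]
  have h2 : cfc f A = cl u * cfc f A * cl u.symm := by
    rw [cfc_apply f A hA hf.continuousOn]
    conv_lhs => rw [h1]
    rfl
  calc cl u * cfc f A = cl u * cfc f A * (cl u.symm * cl u) := by
        rw [cl_symm_mul, mul_one]
    _ = (cl u * cfc f A * cl u.symm) * cl u := by
        simp only [mul_assoc]
    _ = cfc f A * cl u := by rw [← h2]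


variable {G : Type*} [Group G]

lemma pi_inv_apply (π : G →* (H ≃ₗᵢ[ℂ] H)) (x : G) (a : H) :
    π x (π x⁻¹ a) = a := by
  have : π x (π x⁻¹ a) = (π x * π x⁻¹) a := rfl
  rw [this, ← map_mul, mul_inv_cancel, map_one]
  rfl

lemma inner_move (π : G →* (H ≃ₗᵢ[ℂ] H)) (x : G) (a b : H) :
    ⟪a, π x b⟫ = ⟪π x⁻¹ a, b⟫ := by
  conv_lhs => rw [show a = π x (π x⁻¹ a) from (pi_inv_apply π x a).symm]
  rw [(π x).inner_map_map]

lemma inner_move' (π : G →* (H ≃ₗᵢ[ℂ] H)) (x : G) (a b : H) :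
    ⟪π x a, b⟫ = ⟪a, π x⁻¹ b⟫ := by
  conv_lhs => rw [show b = π x (π x⁻¹ b) from (pi_inv_apply π x b).symm]
  rw [(π x).inner_map_map]

lemma schur_selfAdjoint [Nontrivial H] (π : G →* (H ≃ₗᵢ[ℂ] H))
    (hirr : ∀ W : Submodule ℂ H, IsClosed (W : Set H) →
      (∀ g : G, ∀ w ∈ W, π g w ∈ W) → W = ⊥ ∨ W = ⊤)
    (A : H →L[ℂ] H) (hA : IsSelfAdjoint A)
    (hcomm : ∀ g x, A (π g x) = π g (A x)) :
    ∃ r : ℝ, A = (r : ℂ) • (1 : H →L[ℂ] H) := by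
  haveI : Nontrivial (H →L[ℂ] H) := ⟨1, 0, fun hc => by
    obtain ⟨x, hx⟩ := exists_ne (0 : H)
    exact hx (by simpa using congrArg (fun T : H →L[ℂ] H => T x) hc)⟩
  have hmul : ∀ g, cl (π g) * A = A * cl (π g) := fun g => by
    ext x
    simp only [ContinuousLinearMap.mul_apply, cl_apply]
    exact (hcomm g x).symm
  have hsub : (spectrum ℝ A).Subsingleton := by
    by_contra hns
    rw [Set.not_subsingleton_iff] at hns
    obtain ⟨a, ha, b, hb, hab⟩ := hns
    set r : ℝ := |b - a| / 2 with hrdef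
    have hr0 : 0 < r := by
      have : 0 < |b - a| := abs_pos.mpr (sub_ne_zero.mpr (Ne.symm hab))
      positivity
    set f : ℝ → ℝ := fun x => max 0 (1 - |x - a| / r) with hfdef
    set fb : ℝ → ℝ := fun x => max 0 (1 - |x - b| / r) with hfbdef
    have hfc : Continuous f := by
      apply continuous_const.max
      fun_prop
    have hfbc : Continuous fb := by
      apply continuous_const.max
      fun_prop
    have hfa : f a = 1 := by simp [hfdef, hr0.le]
    have hfbb : fb b = 1 := by simp [hfbdef, hr0.le]
    have hzero : ∀ x, f x * fb x = 0 := by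
      intro x
      rcases le_or_gt r |x - a| with hx | hx
      · have : f x = 0 := by
          have h1 : 1 - |x - a| / r ≤ 0 := by
            rw [sub_nonpos, le_div_iff₀ hr0]
            linarith
          simp [hfdef, max_eq_left h1]
        rw [this, zero_mul]
      · have hxb : r ≤ |x - b| := by
          have htri : |b - a| ≤ |x - b| + |x - a| := by
            have := abs_sub_abs_le_abs_sub (b - a) (x - a)
            calc |b - a| = |(b - x) + (x - a)| := by ring_nf
              _ ≤ |b - x| + |x - a| := abs_add_le _ _
              _ = |x - b| + |x - a| := by rw [abs_sub_comm]
          have h2r : |b - a| = 2 * r := by rw [hrdef]; ring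
          linarith
        have : fb x = 0 := by
          have h1 : 1 - |x - b| / r ≤ 0 := by
            rw [sub_nonpos, le_div_iff₀ hr0]
            linarith
          simp [hfbdef, max_eq_left h1]
        rw [this, mul_zero]
    set P := cfc f A with hP
    set Q := cfc fb A with hQ
    have hcomm' : ∀ (φ : ℝ → ℝ), Continuous φ → ∀ g,
        ∀ x, (cfc φ A) (π g x) = π g ((cfc φ A) x) := by
      intro φ hφ g x
      have := commute_cfc (π g) hA (hmul g) φ hφ
      have h3 := congrArg (fun T : H →L[ℂ] H => T x) this.symm
      simpa [ContinuousLinearMap.mul_apply] using h3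
    have hQP : Q * P = 0 := by
      rw [hQ, hP, ← cfc_mul fb f A hfbc.continuousOn hfc.continuousOn]
      have : (fun x => fb x * f x) = fun _ : ℝ => (0 : ℝ) := by
        funext x
        rw [mul_comm]
        exact hzero x
      rw [this, cfc_const 0 A hA, map_zero]
    have hPne : P ≠ 0 := by
      intro hc
      have hmap := cfc_map_spectrum f A hA hfc.continuousOn
      have h1 : (1 : ℝ) ∈ spectrum ℝ P := by
        rw [hP, hmap]
        exact ⟨a, ha, hfa⟩
      rw [hc, spectrum.zero_eq] at h1
      simp at h1
    have hQne : Q ≠ 0 := by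
      intro hc
      have hmap := cfc_map_spectrum fb A hA hfbc.continuousOn
      have h1 : (1 : ℝ) ∈ spectrum ℝ Q := by
        rw [hQ, hmap]
        exact ⟨b, hb, hfbb⟩
      rw [hc, spectrum.zero_eq] at h1
      simp at h1
    set W := (LinearMap.range (P : H →ₗ[ℂ] H)).topologicalClosure with hW
    have hWc : IsClosed (W : Set H) := Submodule.isClosed_topologicalClosure _
    have hWinv : ∀ g : G, ∀ w ∈ W, π g w ∈ W := by
      intro g w hw
      have hmt : Set.MapsTo (π g) (LinearMap.range (P : H →ₗ[ℂ] H) : Set H)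
          (LinearMap.range (P : H →ₗ[ℂ] H) : Set H) := by
        rintro _ ⟨x, rfl⟩
        exact ⟨π g x, hcomm' f hfc g x⟩
      have hcl := hmt.closure (π g).continuous
      have hw' : w ∈ closure (LinearMap.range (P : H →ₗ[ℂ] H) : Set H) := by
        have hww : w ∈ (W : Set H) := hw
        rwa [hW, Submodule.topologicalClosure_coe] at hww
      have h2 := hcl hw'
      show (π g) w ∈ (W : Set H)
      rw [hW, Submodule.topologicalClosure_coe]
      exact h2
    rcases hirr W hWc hWinv with hbot | htop
    · apply hPne
      ext x
      have hx : P x ∈ W := by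
        apply Submodule.le_topologicalClosure
        exact ⟨x, rfl⟩
      rw [hbot] at hx
      simpa using hx
    · apply hQne
      ext x
      have hx : (x : H) ∈ W := by rw [htop]; trivial
      have hker : (W : Set H) ⊆ (LinearMap.ker (Q : H →ₗ[ℂ] H) : Set H) := by
        rw [hW, Submodule.topologicalClosure_coe]
        apply closure_minimal
        · rintro _ ⟨y, rfl⟩
          have : Q (P y) = 0 := by
            have := congrArg (fun T : H →L[ℂ] H => T y) hQP
            simpa [ContinuousLinearMap.mul_apply] using this
          exact this
        · exact ContinuousLinearMap.isClosed_ker Q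
      have := hker hx
      simpa using this
  obtain ⟨r, hr⟩ := hA.spectrum_nonempty
  have hspec : spectrum ℝ A = {r} := hsub.eq_singleton_of_mem hr
  have : A = cfc (fun _ : ℝ => r) A := by
    conv_lhs => rw [← cfc_id ℝ A hA]
    exact cfc_congr (fun x hx => by rw [hspec] at hx; simpa using hx)
  rw [cfc_const r A hA, Algebra.algebraMap_eq_smul_one] at this
  exact ⟨r, by rw [this, ← Complex.coe_smul]⟩


lemma schur [Nontrivial H] (π : G →* (H ≃ₗᵢ[ℂ] H))
    (hirr : ∀ W : Submodule ℂ H, IsClosed (W : Set H) →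
      (∀ g : G, ∀ w ∈ W, π g w ∈ W) → W = ⊥ ∨ W = ⊤)
    (T : H →L[ℂ] H) (hT : ∀ g x, T (π g x) = π g (T x)) :
    ∃ c : ℂ, T = c • (1 : H →L[ℂ] H) := by
  have hadj : ∀ g x, (star T) (π g x) = π g ((star T) x) := by
    intro g x
    apply ext_inner_left ℂ
    intro v
    have e1 : ⟪v, (star T) (π g x)⟫ = ⟪T v, π g x⟫ := by
      rw [ContinuousLinearMap.star_eq_adjoint, ContinuousLinearMap.adjoint_inner_right]
    have e2 : ⟪v, π g ((star T) x)⟫ = ⟪T v, π g x⟫ := by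
      rw [inner_move π g, ContinuousLinearMap.star_eq_adjoint,
        ContinuousLinearMap.adjoint_inner_right, hT g⁻¹ v, inner_move' π g⁻¹, inv_inv]
    rw [e1, e2]
  set A := T + star T with hA
  set B := Complex.I • (T - star T) with hB
  have hAsa : IsSelfAdjoint A := by
    rw [IsSelfAdjoint, hA, star_add, star_star, add_comm]
  have hBsa : IsSelfAdjoint B := by
    have h1 : star B = (-Complex.I) • (star T - T) := by
      rw [hB, star_smul, star_sub, star_star, RCLike.star_def, Complex.conj_I]
    rw [IsSelfAdjoint, h1, hB]
    module
  have commA : ∀ g x, A (π g x) = π g (A x) := by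
    intro g x
    simp [hA, ContinuousLinearMap.add_apply, hT, hadj]
  have commB : ∀ g x, B (π g x) = π g (B x) := by
    intro g x
    simp [hB, ContinuousLinearMap.smul_apply, ContinuousLinearMap.sub_apply, hT, hadj]
  obtain ⟨r, hr⟩ := schur_selfAdjoint π hirr A hAsa commA
  obtain ⟨s, hs⟩ := schur_selfAdjoint π hirr B hBsa commB
  refine ⟨(2⁻¹ : ℂ) * ((r : ℂ) - Complex.I * (s : ℂ)), ?_⟩
  have h2T : (2 : ℂ) • T = A + (-Complex.I) • B := by
    rw [hA, hB, smul_smul]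
    have : -Complex.I * Complex.I = 1 := by
      rw [neg_mul, Complex.I_mul_I, neg_neg]
    rw [this]
    module
  have h3 : (2 : ℂ) • T = ((r : ℂ) - Complex.I * (s : ℂ)) • (1 : H →L[ℂ] H) := by
    rw [h2T, hr, hs]
    module
  have h4 := congrArg (fun S : H →L[ℂ] H => (2⁻¹ : ℂ) • S) h3
  simp only [smul_smul] at h4
  norm_num at h4
  rw [h4]
  norm_num


open Filter

lemma memℒp_conj {X : Type*} [MeasurableSpace X] {μ : Measure X} {f : X → ℂ}
    (hf : MemLp f 2 μ) : MemLp (fun g => conj (f g)) 2 μ := by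
  refine ⟨RCLike.continuous_conj.comp_aestronglyMeasurable hf.1, ?_⟩
  have h2 : eLpNorm (fun g => conj (f g)) 2 μ = eLpNorm f 2 μ :=
    eLpNorm_congr_norm_ae (Eventually.of_forall fun g => RCLike.norm_conj _)
  rw [h2]
  exact hf.2

/-- Construct a bounded operator `H →L[ℂ] L²(μ)` from a pointwise-defined linear family of
square-integrable functions, using the closed graph theorem. -/
lemma mk_clm {X : Type*} [MeasurableSpace X] (μ : Measure X)
    (F : H → X → ℂ)
    (hadd : ∀ h₁ h₂ g, F (h₁ + h₂) g = F h₁ g + F h₂ g)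
    (hsmul : ∀ (a : ℂ) h g, F (a • h) g = a * F h g)
    (hmem : ∀ h, MemLp (F h) 2 μ)
    (hcont : ∀ g, Continuous fun h => F h g) :
    ∃ S : H →L[ℂ] Lp ℂ 2 μ, ∀ h, (S h : X → ℂ) =ᵐ[μ] F h := by
  let L : H →ₗ[ℂ] Lp ℂ 2 μ :=
    { toFun := fun h => (hmem h).toLp
      map_add' := fun h₁ h₂ => by
        rw [MemLp.toLp_congr (hmem (h₁ + h₂)) ((hmem h₁).add (hmem h₂))
          (Eventually.of_forall fun g => by rw [hadd]; rfl)]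
        exact MemLp.toLp_add _ _
      map_smul' := fun a h => by
        rw [MemLp.toLp_congr (hmem (a • h)) ((hmem h).const_smul a)
          (Eventually.of_forall fun g => by rw [hsmul]; rfl)]
        exact MemLp.toLp_const_smul _ _ }
  have hLcont : Continuous L := by
    apply L.continuous_of_seq_closed_graph
    intro u x y hu hLu
    have h1 : TendstoInMeasure μ (fun n => ((L (u n) : X → ℂ))) atTop (y : X → ℂ) :=
      tendstoInMeasure_of_tendsto_Lp hLu
    obtain ⟨ns, hns, haet⟩ := h1.exists_seq_tendsto_ae
    have h2 : ∀ᵐ g ∂μ, ∀ i, (L (u (ns i)) : X → ℂ) g = F (u (ns i)) g :=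
      ae_all_iff.mpr fun i => (hmem _).coeFn_toLp
    have h3 : (y : X → ℂ) =ᵐ[μ] F x := by
      filter_upwards [haet, h2] with g hg1 hg2
      have ht1 : Tendsto (fun i => F (u (ns i)) g) atTop (nhds ((y : X → ℂ) g)) :=
        hg1.congr fun i => hg2 i
      have ht2 : Tendsto (fun i => F (u (ns i)) g) atTop (nhds (F x g)) :=
        ((hcont g).tendsto x).comp (hu.comp hns.tendsto_atTop)
      exact tendsto_nhds_unique ht1 ht2
    exact (Lp.ext (h3.trans ((hmem x).coeFn_toLp).symm) : y = L x)
  exact ⟨⟨L, hLcont⟩, fun h => (hmem h).coeFn_toLp⟩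

end

end SchurOrthAux

/-- **Schur orthogonality relations.** Let `G` be a unimodular locally compact group with
Haar measure `μ`, and `(π, H)` an irreducible unitary representation that is square-integrable,
with formal degree `d > 0` (normalized via a nonzero vector `h₀`).  Then for all
`h h' v v' : H` the matrix coefficients `c_{h,h'}(g) = ⟨π(g)h, h'⟩` satisfy
`⟨c_{h,h'}, c_{v,v'}⟩_{L²(G)} = d⁻¹ ⟨h,v⟩ ⟨v',h'⟩`.
(Inner products are written in the mathematicians' convention, linear in the first variable:
`⟨a,b⟩ = ⟪b,a⟫_ℂ` in Mathlib's convention.) -/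
theorem schur_orthogonality
    {G : Type*} [Group G] [TopologicalSpace G] [IsTopologicalGroup G]
    [LocallyCompactSpace G] [MeasurableSpace G] [BorelSpace G]
    (μ : Measure G) [μ.IsHaarMeasure] [μ.IsMulRightInvariant]
    {H : Type*} [NormedAddCommGroup H] [InnerProductSpace ℂ H] [CompleteSpace H]
    (π : G →* (H ≃ₗᵢ[ℂ] H))
    (hcont : ∀ h h' : H, Continuous fun g => (inner ℂ h' (π g h) : ℂ))
    -- irreducibility:
    (hirr : ∀ W : Submodule ℂ H, IsClosed (W : Set H) →
      (∀ g : G, ∀ w ∈ W, π g w ∈ W) → W = ⊥ ∨ W = ⊤)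
    -- square-integrability of all matrix coefficients:
    (hL2 : ∀ h h' : H, MemLp (fun g => (inner ℂ h' (π g h) : ℂ)) 2 μ)
    -- the formal degree `d`, normalized on a nonzero vector `h₀`:
    (d : ℝ) (hd : 0 < d) (h₀ : H) (h₀ne : h₀ ≠ 0)
    (hdeg : ∫ g, ‖(inner ℂ h₀ (π g h₀) : ℂ)‖ ^ 2 ∂μ = d⁻¹ * ‖h₀‖ ^ 4) :
    ∀ h h' v v' : H,
      ∫ g, (inner ℂ h' (π g h) : ℂ) * conj (inner ℂ v' (π g v) : ℂ) ∂μ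
        = (d⁻¹ : ℂ) * (inner ℂ v h : ℂ) * (inner ℂ h' v' : ℂ) := by
  classical
  intro h h' v v'
  haveI : Nontrivial H := nontrivial_of_ne h₀ 0 h₀ne
  have hπmul : ∀ (g x : G) (a : H), π g (π x a) = π (g * x) a := by
    intro g x a; rw [map_mul]; rfl
  have hmove : ∀ (x : G) (a b : H), (inner ℂ a (π x b) : ℂ) = inner ℂ (π x⁻¹ a) b :=
    fun x a b => SchurOrthAux.inner_move π x a b
  have hmove' : ∀ (x : G) (a b : H), (inner ℂ (π x a) b : ℂ) = inner ℂ a (π x⁻¹ b) :=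
    fun x a b => SchurOrthAux.inner_move' π x a b
  -- Step 1 : for fixed second arguments, the pairing is a multiple of ⟪a', a⟫
  have lemA : ∀ b b' : H, ∃ α : ℂ, ∀ a a' : H,
      (∫ g, (inner ℂ b (π g a) : ℂ) * conj (inner ℂ b' (π g a') : ℂ) ∂μ)
        = α * inner ℂ a' a := by
    intro b b'
    obtain ⟨S, hS⟩ := SchurOrthAux.mk_clm (H := H) μ (fun a g => (inner ℂ b (π g a) : ℂ))
      (fun a₁ a₂ g => by
        show (inner ℂ b (π g (a₁ + a₂)) : ℂ) = inner ℂ b (π g a₁) + inner ℂ b (π g a₂)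
        rw [map_add, inner_add_right])
      (fun c a g => by
        show (inner ℂ b (π g (c • a)) : ℂ) = c * inner ℂ b (π g a)
        rw [_root_.map_smul, inner_smul_right])
      (fun a => hL2 a b)
      (fun g => continuous_const.inner (π g).continuous)
    obtain ⟨S', hS'⟩ := SchurOrthAux.mk_clm (H := H) μ (fun a g => (inner ℂ b' (π g a) : ℂ))
      (fun a₁ a₂ g => by
        show (inner ℂ b' (π g (a₁ + a₂)) : ℂ) = inner ℂ b' (π g a₁) + inner ℂ b' (π g a₂)
        rw [map_add, inner_add_right])
      (fun c a g => by
        show (inner ℂ b' (π g (c • a)) : ℂ) = c * inner ℂ b' (π g a)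
        rw [_root_.map_smul, inner_smul_right])
      (fun a => hL2 a b')
      (fun g => continuous_const.inner (π g).continuous)
    set T := (ContinuousLinearMap.adjoint S').comp S with hTdef
    have hTinner : ∀ a a' : H, (inner ℂ a' (T a) : ℂ)
        = ∫ g, conj ((inner ℂ b' (π g a') : ℂ)) * (inner ℂ b (π g a) : ℂ) ∂μ := by
      intro a a'
      rw [hTdef, ContinuousLinearMap.comp_apply, ContinuousLinearMap.adjoint_inner_right,
        L2.inner_def]
      apply integral_congr_ae
      filter_upwards [hS' a', hS a] with g e1 e2
      rw [e1, e2, RCLike.inner_apply, mul_comm]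
    have hTcomm : ∀ (x : G) (a : H), T (π x a) = π x (T a) := by
      intro x a
      apply ext_inner_left ℂ
      intro w
      rw [hTinner (π x a) w, hmove x w (T a), hTinner a (π x⁻¹ w)]
      rw [← MeasureTheory.integral_mul_right_eq_self
        (fun g => conj ((inner ℂ b' (π g (π x⁻¹ w)) : ℂ)) * (inner ℂ b (π g a) : ℂ)) x]
      congr 1
      funext g
      rw [hπmul g x a, hπmul (g * x) x⁻¹ w, mul_inv_cancel_right]
    obtain ⟨α, hα⟩ := SchurOrthAux.schur π hirr T hTcomm
    refine ⟨α, fun a a' => ?_⟩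
    have key := hTinner a a'
    rw [hα] at key
    simp only [ContinuousLinearMap.smul_apply, ContinuousLinearMap.one_apply,
      inner_smul_right] at key
    calc ∫ g, (inner ℂ b (π g a) : ℂ) * conj (inner ℂ b' (π g a') : ℂ) ∂μ
        = ∫ g, conj ((inner ℂ b' (π g a') : ℂ)) * (inner ℂ b (π g a) : ℂ) ∂μ := by
          congr 1; funext g; ring
      _ = α * inner ℂ a' a := key.symm
  -- Step 2 : for fixed first arguments, the pairing is a multiple of ⟪b, b'⟫
  have lemB : ∀ a a' : H, ∃ γ : ℂ, ∀ b b' : H,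
      (∫ g, (inner ℂ b (π g a) : ℂ) * conj (inner ℂ b' (π g a') : ℂ) ∂μ)
        = γ * inner ℂ b b' := by
    intro a a'
    obtain ⟨M, hM⟩ := SchurOrthAux.mk_clm (H := H) μ (fun bb g => (inner ℂ (π g a) bb : ℂ))
      (fun b₁ b₂ g => inner_add_right _ _ _)
      (fun c bb g => inner_smul_right _ _ _)
      (fun bb => by
        have hfe : (fun g => (inner ℂ (π g a) bb : ℂ))
            = fun g => conj ((inner ℂ bb (π g a) : ℂ)) := by
          funext g; rw [inner_conj_symm]
        show MemLp (fun g => (inner ℂ (π g a) bb : ℂ)) 2 μ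
        rw [hfe]; exact SchurOrthAux.memℒp_conj (hL2 a bb))
      (fun g => Continuous.inner continuous_const continuous_id)
    obtain ⟨M', hM'⟩ := SchurOrthAux.mk_clm (H := H) μ (fun bb g => (inner ℂ (π g a') bb : ℂ))
      (fun b₁ b₂ g => inner_add_right _ _ _)
      (fun c bb g => inner_smul_right _ _ _)
      (fun bb => by
        have hfe : (fun g => (inner ℂ (π g a') bb : ℂ))
            = fun g => conj ((inner ℂ bb (π g a') : ℂ)) := by
          funext g; rw [inner_conj_symm]
        show MemLp (fun g => (inner ℂ (π g a') bb : ℂ)) 2 μ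
        rw [hfe]; exact SchurOrthAux.memℒp_conj (hL2 a' bb))
      (fun g => Continuous.inner continuous_const continuous_id)
    set T := (ContinuousLinearMap.adjoint M').comp M with hTdef
    have hTinner : ∀ b b' : H, (inner ℂ b' (T b) : ℂ)
        = ∫ g, conj ((inner ℂ (π g a') b' : ℂ)) * (inner ℂ (π g a) b : ℂ) ∂μ := by
      intro b b'
      rw [hTdef, ContinuousLinearMap.comp_apply, ContinuousLinearMap.adjoint_inner_right,
        L2.inner_def]
      apply integral_congr_ae
      filter_upwards [hM' b', hM b] with g e1 e2
      rw [e1, e2, RCLike.inner_apply, mul_comm]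
    have hTcomm : ∀ (x : G) (b : H), T (π x b) = π x (T b) := by
      intro x b
      apply ext_inner_left ℂ
      intro w
      rw [hTinner (π x b) w, hmove x w (T b), hTinner b (π x⁻¹ w)]
      have hrw : ∀ g : G, (inner ℂ (π g a') (π x⁻¹ w) : ℂ) = inner ℂ (π (x * g) a') w := by
        intro g
        rw [← hπmul x g a', ← hmove' x (π g a') w]
      simp_rw [hrw]
      rw [← MeasureTheory.integral_mul_left_eq_self
        (fun g => conj ((inner ℂ (π (x * g) a') w : ℂ)) * (inner ℂ (π g a) b : ℂ)) x⁻¹]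
      congr 1
      funext g
      have e3 : x * (x⁻¹ * g) = g := by group
      rw [e3]
      have e4 : (inner ℂ (π (x⁻¹ * g) a) b : ℂ) = inner ℂ (π g a) (π x b) := by
        rw [← hπmul x⁻¹ g a, hmove' x⁻¹ (π g a) b, inv_inv]
      rw [e4]
    obtain ⟨β, hβ⟩ := SchurOrthAux.schur π hirr T hTcomm
    refine ⟨conj β, fun b b' => ?_⟩
    have key := hTinner b b'
    rw [hβ] at key
    simp only [ContinuousLinearMap.smul_apply, ContinuousLinearMap.one_apply,
      inner_smul_right] at key
    have key2 := congrArg (starRingEnd ℂ) key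
    rw [← integral_conj, map_mul, inner_conj_symm] at key2
    calc ∫ g, (inner ℂ b (π g a) : ℂ) * conj ((inner ℂ b' (π g a') : ℂ)) ∂μ
        = ∫ g, conj (conj ((inner ℂ (π g a') b' : ℂ)) * (inner ℂ (π g a) b : ℂ)) ∂μ := by
          congr 1; funext g
          simp only [map_mul, starRingEnd_self_apply, inner_conj_symm]
          ring
      _ = conj β * inner ℂ b b' := key2.symm
  -- final assembly
  obtain ⟨α, hα⟩ := lemA h' v'
  obtain ⟨γ, hγ⟩ := lemB h₀ h₀
  have e1 := hα h v
  have e2 := hα h₀ h₀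
  have e3 := hγ h' v'
  have e4 := hγ h₀ h₀
  have hn : (inner ℂ h₀ h₀ : ℂ) = ((‖h₀‖ ^ 2 : ℝ) : ℂ) := by
    rw [inner_self_eq_norm_sq_to_K]
    norm_cast
  have hnnez : ((‖h₀‖ ^ 2 : ℝ) : ℂ) ≠ 0 := by
    exact_mod_cast pow_ne_zero 2 (norm_ne_zero_iff.mpr h₀ne)
  set n : ℂ := ((‖h₀‖ ^ 2 : ℝ) : ℂ) with hndef
  have e5 : ∫ g, (inner ℂ h₀ (π g h₀) : ℂ) * conj (inner ℂ h₀ (π g h₀) : ℂ) ∂μ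
      = ((d⁻¹ * ‖h₀‖ ^ 4 : ℝ) : ℂ) := by
    rw [← hdeg]
    rw [show ((∫ g, ‖(inner ℂ h₀ (π g h₀) : ℂ)‖ ^ 2 ∂μ : ℝ) : ℂ)
        = ∫ g, ((‖(inner ℂ h₀ (π g h₀) : ℂ)‖ ^ 2 : ℝ) : ℂ) ∂μ from integral_ofReal.symm]
    congr 1; funext g
    rw [Complex.mul_conj]
    norm_cast
    simp [Complex.normSq_eq_norm_sq]
  have eγ : γ * n = ((d⁻¹ : ℝ) : ℂ) * n * n := by
    have h6 : γ * (inner ℂ h₀ h₀ : ℂ) = ((d⁻¹ * ‖h₀‖ ^ 4 : ℝ) : ℂ) := by rw [← e4, e5]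
    rw [hn] at h6
    rw [h6, hndef]
    push_cast
    ring
  have hγval : γ = ((d⁻¹ : ℝ) : ℂ) * n :=
    mul_right_cancel₀ hnnez (by rw [eγ])
  have eα : α * n = γ * (inner ℂ h' v' : ℂ) := by
    have h7 := e2.symm.trans e3
    rw [hn] at h7
    exact h7
  have hαval : α = ((d⁻¹ : ℝ) : ℂ) * (inner ℂ h' v' : ℂ) :=
    mul_right_cancel₀ hnnez (by rw [eα, hγval]; ring)
  rw [e1, hαval]
  push_cast
  ring
end

section
/- Let G be a unimodular locally compact group, and let (π, H) and (σ, V) be inequivalent irreducible square-integrable unitary representations of G. Then for all h, h' ∈ H and v, v' ∈ V, the matrix coefficients are orthogonal in L²(G): ⟨c_{h,h'}, c_{v,v'}⟩_{L²(G)} = 0. -/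
set_option maxHeartbeats 1000000


open MeasureTheory ComplexConjugate Filter Topology Polynomial

/-- Any operator commuting with a selfadjoint operator `a` commutes with `cfc f a`. -/
private lemma schur_commute_cfc_of_commute
    {V : Type*} [NormedAddCommGroup V] [InnerProductSpace ℂ V] [CompleteSpace V]
    (a b : V →L[ℂ] V) (ha : IsSelfAdjoint a) (hab : Commute a b)
    (f : ℝ → ℝ) (hf : Continuous f) : Commute (cfc f a) b := by
  have hpoly : ∀ q : ℝ[X], Commute (aeval a q) b := by
    intro q
    induction q using Polynomial.induction_on with
    | C r => simpa using Commute.symm (Algebra.commute_algebraMap_right r b)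
    | add p q hp hq => simpa [map_add] using hp.add_left hq
    | monomial n r hq =>
        simpa [map_mul, map_pow] using
          ((Algebra.commute_algebraMap_right r b).symm).mul_left (hab.pow_left (n+1))
  have hclosed : IsClosed {x : V →L[ℂ] V | Commute x b} := by
    have : {x : V →L[ℂ] V | Commute x b} = {x : V →L[ℂ] V | x * b = b * x} := rfl
    rw [this]
    exact isClosed_eq (continuous_id.mul continuous_const) (continuous_const.mul continuous_id)
  have key : ∀ g : C(spectrum ℝ a, ℝ), Commute (cfcHom ha (R := ℝ) g) b := by
    intro g
    have hsub : (polynomialFunctions (spectrum ℝ a) : Set C(spectrum ℝ a, ℝ))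
        ⊆ (cfcHom ha (R := ℝ)) ⁻¹' {x | Commute x b} := by
      intro p hp
      rw [polynomialFunctions_coe] at hp
      obtain ⟨q, rfl⟩ := hp
      have h1 : cfcHom ha (R := ℝ) (toContinuousMapOnAlgHom (spectrum ℝ a) q) =
          cfc q.eval a := by
        rw [cfc_apply q.eval a ha q.continuous_aeval.continuousOn]
        congr 1
      show Commute _ b
      rw [h1, cfc_polynomial q a ha]
      exact hpoly q
    have hdense := polynomialFunctions.topologicalClosure (spectrum ℝ a)
    have hclos : closure (polynomialFunctions (spectrum ℝ a) : Set C(spectrum ℝ a, ℝ))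
        = Set.univ := by
      have := congrArg
        (fun (s : Subalgebra ℝ C(spectrum ℝ a, ℝ)) => (s : Set C(spectrum ℝ a, ℝ))) hdense
      simpa [Subalgebra.topologicalClosure_coe] using this
    have hcl : IsClosed ((cfcHom ha (R := ℝ)) ⁻¹' {x | Commute x b}) :=
      hclosed.preimage (cfcHom_isClosedEmbedding ha).continuous
    have h2 := closure_minimal hsub hcl
    rw [hclos] at h2
    exact h2 (Set.mem_univ g)
  rw [cfc_apply f a ha hf.continuousOn]
  exact key _

/-- A linear family of uniformly bounded square-integrable functions gives a continuous
linear map into `L²`, by the closed graph theorem. -/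
private lemma schur_exists_coeff_clm {G : Type*} [MeasurableSpace G] {μ : Measure G}
    {H : Type*} [NormedAddCommGroup H] [InnerProductSpace ℂ H] [CompleteSpace H]
    (c : H → G → ℂ) (C0 : ℝ)
    (hadd : ∀ h k, c (h + k) = c h + c k)
    (hsmul : ∀ (a : ℂ) (h), c (a • h) = a • c h)
    (hbound : ∀ h g, ‖c h g‖ ≤ C0 * ‖h‖)
    (hL2 : ∀ h, MemLp (c h) 2 μ) :
    ∃ T : H →L[ℂ] Lp ℂ 2 μ, ∀ h, (T h : G → ℂ) =ᵐ[μ] c h := by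
  have hsub : ∀ h k, c (h - k) = c h - c k := by
    intro h k
    have := hadd (h - k) k
    rw [sub_add_cancel] at this
    rw [eq_sub_iff_add_eq, ← this]
  let L0 : H →ₗ[ℂ] Lp ℂ 2 μ :=
    { toFun := fun h => (hL2 h).toLp (c h)
      map_add' := fun h k => by
        rw [← MemLp.toLp_add (hL2 h) (hL2 k)]
        exact MemLp.toLp_congr _ _ (by rw [hadd])
      map_smul' := fun a h => by
        simp only [RingHom.id_apply]
        rw [← MemLp.toLp_const_smul a (hL2 h)]
        exact MemLp.toLp_congr _ _ (by rw [hsmul]) }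
  have hcont : Continuous L0 := by
    apply LinearMap.continuous_of_seq_closed_graph
    intro u x y hux huy
    have hmeas : TendstoInMeasure μ (fun n => ((L0 (u n) : Lp ℂ 2 μ) : G → ℂ)) atTop
        ((y : Lp ℂ 2 μ) : G → ℂ) :=
      tendstoInMeasure_of_tendsto_Lp (by exact huy)
    obtain ⟨ns, hns, hae⟩ := hmeas.exists_seq_tendsto_ae
    have hpt : ∀ g, Tendsto (fun n => c (u n) g) atTop (𝓝 (c x g)) := by
      intro g
      rw [← tendsto_sub_nhds_zero_iff]
      have hb : ∀ n, ‖c (u n) g - c x g‖ ≤ C0 * ‖u n - x‖ := by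
        intro n; rw [← Pi.sub_apply, ← hsub]; exact hbound _ g
      have hn0 : Tendsto (fun n => C0 * ‖u n - x‖) atTop (𝓝 0) := by
        have : Tendsto (fun n => ‖u n - x‖) atTop (𝓝 0) :=
          (tendsto_iff_norm_sub_tendsto_zero).mp hux
        simpa using this.const_mul C0
      exact squeeze_zero_norm hb hn0
    have hcoe : ∀ n, ((L0 (u n) : Lp ℂ 2 μ) : G → ℂ) =ᵐ[μ] c (u n) :=
      fun n => MemLp.coeFn_toLp (hL2 (u n))
    have hx : ((L0 x : Lp ℂ 2 μ) : G → ℂ) =ᵐ[μ] c x := MemLp.coeFn_toLp (hL2 x)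
    have : ((y : Lp ℂ 2 μ) : G → ℂ) =ᵐ[μ] c x := by
      filter_upwards [hae, ae_all_iff.2 hcoe] with g hg hg2
      have h1 : Tendsto (fun i => c (u (ns i)) g) atTop (𝓝 (y g)) := by
        simpa [hg2] using hg
      have h2 : Tendsto (fun i => c (u (ns i)) g) atTop (𝓝 (c x g)) :=
        (hpt g).comp (hns.tendsto_atTop)
      exact tendsto_nhds_unique h1 h2
    exact (Lp.ext (this.trans hx.symm) : y = L0 x)
  refine ⟨⟨L0, hcont⟩, fun h => ?_⟩
  exact MemLp.coeFn_toLp (hL2 h)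

private lemma schur_rep_apply_inv_apply {G H : Type*} [Group G] [NormedAddCommGroup H]
    [InnerProductSpace ℂ H] (π : G →* (H ≃ₗᵢ[ℂ] H)) (g : G) (k : H) :
    π g (π g⁻¹ k) = k := by
  have h1 : π g * π g⁻¹ = 1 := by rw [← map_mul, mul_inv_cancel, map_one]
  have := congrArg (fun e : H ≃ₗᵢ[ℂ] H => e k) h1
  simpa using this

/-- Matrix coefficients of two inequivalent irreducible square-integrable unitary
representations `(π, H)` and `(σ, V)` of a unimodular locally compact group `G` are
orthogonal in `L²(G)`:  `⟨c_{h,h'}, c_{v,v'}⟩_{L²(G)} = 0`.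
Here `c_{h,h'}(g) = ⟨π(g)h, h'⟩ = ⟪h', π g h⟫_ℂ` (Mathlib's inner ℂ product is conjugate-linear
in the first variable), and "inequivalent" means there is no unitary `G`-equivariant
isomorphism `H ≃ V`. -/
theorem schur_orthogonality_inequivalent
    {G : Type*} [Group G] [TopologicalSpace G] [IsTopologicalGroup G]
    [LocallyCompactSpace G] [MeasurableSpace G] [BorelSpace G]
    (μ : Measure G) [μ.IsHaarMeasure] [μ.IsMulRightInvariant]
    {H : Type*} [NormedAddCommGroup H] [InnerProductSpace ℂ H] [CompleteSpace H]
    {V : Type*} [NormedAddCommGroup V] [InnerProductSpace ℂ V] [CompleteSpace V]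
    (π : G →* (H ≃ₗᵢ[ℂ] H)) (σ : G →* (V ≃ₗᵢ[ℂ] V))
    (hcontπ : ∀ h h' : H, Continuous fun g => (inner ℂ h' (π g h) : ℂ))
    (hcontσ : ∀ v v' : V, Continuous fun g => (inner ℂ v' (σ g v) : ℂ))
    -- irreducibility of both representations:
    (hirrπ : ∀ W : Submodule ℂ H, IsClosed (W : Set H) →
      (∀ g : G, ∀ w ∈ W, π g w ∈ W) → W = ⊥ ∨ W = ⊤)
    (hirrσ : ∀ W : Submodule ℂ V, IsClosed (W : Set V) →
      (∀ g : G, ∀ w ∈ W, σ g w ∈ W) → W = ⊥ ∨ W = ⊤)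
    -- square-integrability of all matrix coefficients:
    (hL2π : ∀ h h' : H, MemLp (fun g => (inner ℂ h' (π g h) : ℂ)) 2 μ)
    (hL2σ : ∀ v v' : V, MemLp (fun g => (inner ℂ v' (σ g v) : ℂ)) 2 μ)
    -- inequivalence:
    (hineq : ¬ ∃ e : H ≃ₗᵢ[ℂ] V, ∀ (g : G) (h : H), e (π g h) = σ g (e h)) :
    ∀ (h h' : H) (v v' : V),
      ∫ g, (inner ℂ h' (π g h) : ℂ) * conj (inner ℂ v' (σ g v) : ℂ) ∂μ = 0 := by
  intro h h' v v'
  classical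
  -- the coefficient functions
  let c : H → G → ℂ := fun k g => (inner ℂ h' (π g k) : ℂ)
  let d : V → G → ℂ := fun w g => (inner ℂ v' (σ g w) : ℂ)
  -- the coefficient maps into L²
  obtain ⟨Lπ, hLπ⟩ : ∃ T : H →L[ℂ] Lp ℂ 2 μ, ∀ k, (T k : G → ℂ) =ᵐ[μ] c k := by
    refine schur_exists_coeff_clm c ‖h'‖ (fun k l => ?_) (fun a k => ?_) (fun k g => ?_)
      (fun k => hL2π k h')
    · funext g; simp [c, inner_add_right]
    · funext g; simp [c, inner_smul_right]
    · calc ‖(inner ℂ h' (π g k) : ℂ)‖ ≤ ‖h'‖ * ‖π g k‖ := norm_inner_le_norm _ _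
        _ = ‖h'‖ * ‖k‖ := by rw [(π g).norm_map]
  obtain ⟨Lσ, hLσ⟩ : ∃ T : V →L[ℂ] Lp ℂ 2 μ, ∀ w, (T w : G → ℂ) =ᵐ[μ] d w := by
    refine schur_exists_coeff_clm d ‖v'‖ (fun k l => ?_) (fun a k => ?_) (fun k g => ?_)
      (fun k => hL2σ k v')
    · funext g; simp [d, inner_add_right]
    · funext g; simp [d, inner_smul_right]
    · calc ‖(inner ℂ v' (σ g k) : ℂ)‖ ≤ ‖v'‖ * ‖σ g k‖ := norm_inner_le_norm _ _
        _ = ‖v'‖ * ‖k‖ := by rw [(σ g).norm_map]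
  -- the invariant pairing, computed as an integral
  have hBdef : ∀ (k : H) (w : V),
      (inner ℂ (Lσ w) (Lπ k) : ℂ) = ∫ g, conj (d w g) * c k g ∂μ := by
    intro k w
    rw [MeasureTheory.L2.inner_def]
    apply integral_congr_ae
    filter_upwards [hLπ k, hLσ w] with g e1 e2
    rw [e1, e2, RCLike.inner_apply, mul_comm]
  have hBinv : ∀ (g : G) (k : H) (w : V),
      (inner ℂ (Lσ (σ g w)) (Lπ (π g k)) : ℂ) = (inner ℂ (Lσ w) (Lπ k) : ℂ) := by
    intro g k w
    rw [hBdef, hBdef,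
      ← MeasureTheory.integral_mul_right_eq_self (fun x => conj (d w x) * c k x) g]
    refine integral_congr_ae (Eventually.of_forall fun x => ?_)
    have hcc : c (π g k) x = c k (x * g) := by
      simp only [c, map_mul, LinearIsometryEquiv.coe_mul, Function.comp_apply]
    have hdd : d (σ g w) x = d w (x * g) := by
      simp only [d, map_mul, LinearIsometryEquiv.coe_mul, Function.comp_apply]
    simp only [hcc, hdd]
  -- the intertwining operator S : V → H
  let S₀ : V → H := fun w => (InnerProductSpace.toDual ℂ H).symm ((innerSL ℂ (Lσ w)).comp Lπ)
  have key : ∀ (w : V) (k : H), (inner ℂ (S₀ w) k : ℂ) = (inner ℂ (Lσ w) (Lπ k) : ℂ) := by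
    intro w k
    simp [S₀, InnerProductSpace.toDual_symm_apply]
  have hS0add : ∀ w1 w2, S₀ (w1 + w2) = S₀ w1 + S₀ w2 := by
    intro w1 w2; apply ext_inner_right ℂ; intro k
    simp [key, map_add, inner_add_left]
  have hS0smul : ∀ (a : ℂ) (w), S₀ (a • w) = a • S₀ w := by
    intro a w; apply ext_inner_right ℂ; intro k
    simp [key, _root_.map_smul, inner_smul_left]
  have hS0bound : ∀ w, ‖S₀ w‖ ≤ (‖Lπ‖ * ‖Lσ‖) * ‖w‖ := by
    intro w
    have h1 : ‖S₀ w‖ = ‖(innerSL ℂ (Lσ w)).comp Lπ‖ :=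
      (InnerProductSpace.toDual ℂ H).symm.norm_map _
    rw [h1]
    calc ‖(innerSL ℂ (Lσ w)).comp Lπ‖ ≤ ‖innerSL ℂ (Lσ w)‖ * ‖Lπ‖ :=
          ContinuousLinearMap.opNorm_comp_le _ _
      _ = ‖Lσ w‖ * ‖Lπ‖ := by rw [innerSL_apply_norm]
      _ ≤ (‖Lσ‖ * ‖w‖) * ‖Lπ‖ :=
          mul_le_mul_of_nonneg_right (Lσ.le_opNorm w) (norm_nonneg _)
      _ = (‖Lπ‖ * ‖Lσ‖) * ‖w‖ := by ring
  let S : V →L[ℂ] H :=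
    LinearMap.mkContinuous
      { toFun := S₀
        map_add' := hS0add
        map_smul' := fun a w => by simpa using hS0smul a w } _ hS0bound
  have hSapp : ∀ w, S w = S₀ w := fun w => rfl
  have keyS : ∀ (w : V) (k : H), (inner ℂ (S w) k : ℂ) = (inner ℂ (Lσ w) (Lπ k) : ℂ) := by
    intro w k; rw [hSapp]; exact key w k
  -- S intertwines σ and π
  have hint : ∀ (g : G) (w : V), S (σ g w) = π g (S w) := by
    intro g w
    apply ext_inner_right ℂ
    intro k
    calc (inner ℂ (S (σ g w)) k : ℂ)
        = inner ℂ (Lσ (σ g w)) (Lπ k) := keyS _ _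
      _ = inner ℂ (Lσ (σ g w)) (Lπ (π g (π g⁻¹ k))) := by
          rw [schur_rep_apply_inv_apply π g k]
      _ = inner ℂ (Lσ w) (Lπ (π g⁻¹ k)) := hBinv g (π g⁻¹ k) w
      _ = inner ℂ (S w) ((π g⁻¹ k : H)) := (keyS _ _).symm
      _ = inner ℂ (π g (S w)) (π g (π g⁻¹ k)) := ((π g).inner_map_map _ _).symm
      _ = inner ℂ (π g (S w)) k := by rw [schur_rep_apply_inv_apply π g k]
  by_cases hS : ∀ w, S w = 0
  · -- S = 0, hence the pairing vanishes
    calc ∫ g, c h g * conj (d v g) ∂μ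
        = ∫ g, conj (d v g) * c h g ∂μ := by simp_rw [mul_comm]
      _ = inner ℂ (Lσ v) (Lπ h) := (hBdef h v).symm
      _ = inner ℂ (S v) h := (keyS v h).symm
      _ = 0 := by rw [hS v]; simp
  · -- otherwise, build a unitary equivalence, contradicting `hineq`
    exfalso
    apply hineq
    push_neg at hS
    obtain ⟨v₀, hv₀⟩ := hS
    have hv₀ne : v₀ ≠ 0 := fun hv => hv₀ (by rw [hv, map_zero])
    haveI : Nontrivial V := ⟨⟨v₀, 0, hv₀ne⟩⟩
    -- the positive operator A = S† S
    let A : V →L[ℂ] V := (ContinuousLinearMap.adjoint S).comp S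
    have hAsa : IsSelfAdjoint A := by
      rw [IsSelfAdjoint, ContinuousLinearMap.star_eq_adjoint,
        ContinuousLinearMap.adjoint_comp, ContinuousLinearMap.adjoint_adjoint]
    have hAinner : ∀ w1 w2 : V, (inner ℂ (A w1) w2 : ℂ) = inner ℂ (S w1) (S w2) :=
      fun w1 w2 => ContinuousLinearMap.adjoint_inner_left S w2 (S w1)
    -- A commutes with σ
    have hadj : ∀ (g : G) (k : H),
        (ContinuousLinearMap.adjoint S) (π g k) = σ g ((ContinuousLinearMap.adjoint S) k) := by
      intro g k
      apply ext_inner_right ℂ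
      intro w
      calc (inner ℂ ((ContinuousLinearMap.adjoint S) (π g k)) w : ℂ)
          = inner ℂ (π g k) (S w) := ContinuousLinearMap.adjoint_inner_left S w (π g k)
        _ = inner ℂ (π g k) (π g (π g⁻¹ (S w))) := by rw [schur_rep_apply_inv_apply π g (S w)]
        _ = inner ℂ k (π g⁻¹ (S w)) := (π g).inner_map_map _ _
        _ = inner ℂ k (S (σ g⁻¹ w)) := by rw [hint g⁻¹ w]
        _ = inner ℂ ((ContinuousLinearMap.adjoint S) k) ((σ g⁻¹ w : V)) :=
            (ContinuousLinearMap.adjoint_inner_left S (σ g⁻¹ w) k).symm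
        _ = inner ℂ (σ g ((ContinuousLinearMap.adjoint S) k)) (σ g (σ g⁻¹ w)) :=
            ((σ g).inner_map_map _ _).symm
        _ = inner ℂ (σ g ((ContinuousLinearMap.adjoint S) k)) w := by
            rw [schur_rep_apply_inv_apply σ g w]
    have hcomm : ∀ g : G, Commute A ((σ g).toLinearIsometry.toContinuousLinearMap) := by
      intro g
      apply ContinuousLinearMap.ext
      intro w
      show A (σ g w) = σ g (A w)
      calc A (σ g w) = (ContinuousLinearMap.adjoint S) (S (σ g w)) := rfl
        _ = (ContinuousLinearMap.adjoint S) (π g (S w)) := by rw [hint]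
        _ = σ g ((ContinuousLinearMap.adjoint S) (S w)) := hadj g (S w)
        _ = σ g (A w) := rfl
    haveI : Nontrivial (V →L[ℂ] V) := ⟨1, 0, fun h10 => hv₀ne (by
      have := congrArg (fun (X : V →L[ℂ] V) => X v₀) h10
      simpa using this)⟩
    obtain ⟨lam, hlam⟩ := hAsa.spectrum_nonempty
    -- the spectrum of A is a single point
    have hspec : spectrum ℝ A ⊆ {lam} := by
      by_contra hcon
      obtain ⟨mu, hmu, hmune⟩ : ∃ mu ∈ spectrum ℝ A, mu ≠ lam := by
        rw [Set.not_subset] at hcon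
        obtain ⟨mu, h1, h2⟩ := hcon
        exact ⟨mu, h1, h2⟩
      set δ : ℝ := |lam - mu| with hδ
      have hδpos : 0 < δ := abs_pos.2 (sub_ne_zero.2 (fun hh => hmune hh.symm))
      set f : ℝ → ℝ := fun x => max 0 (1 - 2 * |x - lam| / δ) with hf
      set k : ℝ → ℝ := fun x => max 0 (1 - 2 * |x - mu| / δ) with hk
      have hfc : Continuous f := by
        apply continuous_const.max
        fun_prop
      have hkc : Continuous k := by
        apply continuous_const.max
        fun_prop
      have hfk0 : ∀ x, f x * k x = 0 := by
        intro x
        rcases le_or_gt (1 - 2 * |x - lam| / δ) 0 with hx | hx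
        · have : f x = 0 := max_eq_left hx
          rw [this, zero_mul]
        rcases le_or_gt (1 - 2 * |x - mu| / δ) 0 with hy | hy
        · have : k x = 0 := max_eq_left hy
          rw [this, mul_zero]
        exfalso
        have h1 : |x - lam| < δ / 2 := by
          rw [sub_pos] at hx
          rw [div_lt_iff₀ hδpos] at hx
          nlinarith
        have h2 : |x - mu| < δ / 2 := by
          rw [sub_pos] at hy
          rw [div_lt_iff₀ hδpos] at hy
          nlinarith
        have h3 : δ ≤ |x - lam| + |x - mu| := by
          calc δ = |lam - mu| := rfl
            _ ≤ |lam - x| + |x - mu| := abs_sub_le lam x mu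
            _ = |x - lam| + |x - mu| := by rw [abs_sub_comm]
        linarith
      have hf1 : f lam = 1 := by
        simp [hf]
      have hk1 : k mu = 1 := by
        simp [hk]
      have hPQ : cfc f A * cfc k A = 0 := by
        rw [← cfc_mul f k A hfc.continuousOn hkc.continuousOn]
        have h0 : cfc (fun x => f x * k x) A = cfc (fun _ : ℝ => (0 : ℝ)) A :=
          cfc_congr fun x _ => hfk0 x
        rw [h0, cfc_const 0 A hAsa, map_zero]
      have hPne : cfc f A ≠ 0 := by
        intro h0
        have h1mem : (1 : ℝ) ∈ spectrum ℝ (cfc f A) := by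
          rw [cfc_map_spectrum f A hAsa hfc.continuousOn]
          exact ⟨lam, hlam, hf1⟩
        rw [h0, spectrum.zero_eq] at h1mem
        simp at h1mem
      have hQne : cfc k A ≠ 0 := by
        intro h0
        have h1mem : (1 : ℝ) ∈ spectrum ℝ (cfc k A) := by
          rw [cfc_map_spectrum k A hAsa hkc.continuousOn]
          exact ⟨mu, hmu, hk1⟩
        rw [h0, spectrum.zero_eq] at h1mem
        simp at h1mem
      have hPcomm : ∀ (g : G) (w : V), (cfc f A) (σ g w) = σ g ((cfc f A) w) := by
        intro g w
        have hc := schur_commute_cfc_of_commute A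
          ((σ g).toLinearIsometry.toContinuousLinearMap) hAsa (hcomm g) f hfc
        have := congrArg (fun (X : V →L[ℂ] V) => X w) hc.eq
        simpa using this
      rcases hirrσ (LinearMap.ker ((cfc f A : V →L[ℂ] V) : V →ₗ[ℂ] V)) (ContinuousLinearMap.isClosed_ker _)
          (by
            intro g w hw
            change (cfc f A : V →L[ℂ] V) w = 0 at hw
            change (cfc f A : V →L[ℂ] V) (σ g w) = 0
            rw [hPcomm g w, hw, map_zero]) with hbot | htop
      · obtain ⟨v₁, hv₁⟩ : ∃ w, (cfc k A) w ≠ 0 := by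
          by_contra hq
          push_neg at hq
          exact hQne (ContinuousLinearMap.ext hq)
        have hmem : (cfc k A) v₁ ∈ LinearMap.ker ((cfc f A : V →L[ℂ] V) : V →ₗ[ℂ] V) := by
          rw [LinearMap.mem_ker]
          have := congrArg (fun (X : V →L[ℂ] V) => X v₁) hPQ
          simpa using this
        rw [hbot] at hmem
        exact hv₁ (by simpa using hmem)
      · apply hPne
        apply ContinuousLinearMap.ext
        intro w
        have hw : w ∈ LinearMap.ker ((cfc f A : V →L[ℂ] V) : V →ₗ[ℂ] V) := htop ▸ Submodule.mem_top
        simpa using hw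
    have hAeq : A = algebraMap ℝ (V →L[ℂ] V) lam :=
      CFC.eq_algebraMap_of_spectrum_subset_singleton (R := ℝ) A lam hspec hAsa
    -- ‖S w‖² = lam ‖w‖²
    have hnorm : ∀ w : V, ‖S w‖ ^ 2 = lam * ‖w‖ ^ 2 := by
      intro w
      have h1 : (inner ℂ (A w) w : ℂ) = inner ℂ (S w) (S w) := hAinner w w
      rw [hAeq] at h1
      have h2 : algebraMap ℝ (V →L[ℂ] V) lam w = (lam : ℂ) • w := by
        rw [Algebra.algebraMap_eq_smul_one]
        rw [ContinuousLinearMap.smul_apply, ContinuousLinearMap.one_apply]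
        exact RCLike.real_smul_eq_coe_smul (K := ℂ) lam w
      rw [h2, inner_smul_left, Complex.conj_ofReal, inner_self_eq_norm_sq_to_K,
        inner_self_eq_norm_sq_to_K] at h1
      have hcast : ∀ r : ℝ, (RCLike.ofReal r : ℂ) = Complex.ofReal r := fun r => rfl
      simp only [hcast] at h1
      exact_mod_cast h1.symm
    have hlampos : 0 < lam := by
      have h1 := hnorm v₀
      have h2 : 0 < ‖S v₀‖ ^ 2 := pow_pos (norm_pos_iff.mpr hv₀) 2
      rw [h1] at h2
      nlinarith [sq_nonneg ‖v₀‖]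
    have hsq : 0 < Real.sqrt lam := Real.sqrt_pos.2 hlampos
    set cc : ℂ := (((Real.sqrt lam)⁻¹ : ℝ) : ℂ) with hcc
    have hccne : cc ≠ 0 := by
      rw [hcc]
      exact_mod_cast inv_ne_zero hsq.ne'
    have hUnorm : ∀ w : V, ‖cc • S w‖ = ‖w‖ := by
      intro w
      have h1 : ‖S w‖ = Real.sqrt lam * ‖w‖ := by
        have h2 : ‖S w‖ = Real.sqrt (lam * ‖w‖ ^ 2) := by
          rw [← hnorm w, Real.sqrt_sq (norm_nonneg _)]
        rw [h2, Real.sqrt_mul hlampos.le, Real.sqrt_sq (norm_nonneg _)]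
      rw [norm_smul, h1, hcc]
      have h3 : ‖(((Real.sqrt lam)⁻¹ : ℝ) : ℂ)‖ = (Real.sqrt lam)⁻¹ := by
        rw [Complex.norm_real, Real.norm_eq_abs, abs_of_nonneg (inv_nonneg.2 hsq.le)]
      rw [h3, ← mul_assoc, inv_mul_cancel₀ hsq.ne', one_mul]
    let Ui : V →ₗᵢ[ℂ] H :=
      { toLinearMap := (cc • S : V →L[ℂ] H).toLinearMap
        norm_map' := fun w => by simpa using hUnorm w }
    have hUiapp : ∀ w, Ui w = cc • S w := fun w => rfl
    have hintU : ∀ (g : G) (w : V), Ui (σ g w) = π g (Ui w) := by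
      intro g w
      rw [hUiapp, hUiapp, hint g w, _root_.map_smul]
    -- the range of S is dense
    have hMtop : (LinearMap.range (S : V →ₗ[ℂ] H)).topologicalClosure = ⊤ := by
      rcases hirrπ (LinearMap.range (S : V →ₗ[ℂ] H)).topologicalClosure
          (Submodule.isClosed_topologicalClosure _)
          (by
            intro g w hw
            have hmap : Set.MapsTo (π g) (LinearMap.range (S : V →ₗ[ℂ] H) : Set H)
                (LinearMap.range (S : V →ₗ[ℂ] H) : Set H) := by
              rintro x ⟨w', rfl⟩
              exact ⟨σ g w', hint g w'⟩
            have hw' : w ∈ closure ((LinearMap.range (S : V →ₗ[ℂ] H) : Submodule ℂ H) : Set H) := by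
              rw [← SetLike.mem_coe, Submodule.topologicalClosure_coe] at hw
              exact hw
            have h2 := hmap.closure (π g).continuous hw'
            rw [← SetLike.mem_coe, Submodule.topologicalClosure_coe]
            exact h2) with hb | ht
      · exfalso
        have hmem : S v₀ ∈ (LinearMap.range (S : V →ₗ[ℂ] H)).topologicalClosure :=
          Submodule.le_topologicalClosure _ (LinearMap.mem_range_self (S : V →ₗ[ℂ] H) v₀)
        rw [hb] at hmem
        exact hv₀ (by simpa using hmem)
      · exact ht
    -- Ui is surjective
    have hclosedrange : IsClosed (Set.range Ui) :=
      Ui.isometry.isClosedEmbedding.isClosed_range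
    have hSsub : Set.range (S : V → H) ⊆ Set.range Ui := by
      rintro x ⟨w, rfl⟩
      refine ⟨cc⁻¹ • w, ?_⟩
      rw [hUiapp, _root_.map_smul, smul_smul, mul_inv_cancel₀ hccne, one_smul]
    have hsurj : Function.Surjective Ui := by
      intro x
      have hx : x ∈ closure (Set.range (S : V → H)) := by
        have h1 : x ∈ ((⊤ : Submodule ℂ H) : Set H) := trivial
        rw [← hMtop, Submodule.topologicalClosure_coe, LinearMap.coe_range] at h1
        exact h1
      have h2 := closure_mono hSsub hx
      rwa [hclosedrange.closure_eq] at h2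
    let e' : V ≃ₗᵢ[ℂ] H := LinearIsometryEquiv.ofSurjective Ui hsurj
    have he' : ∀ w, e' w = Ui w := fun w => rfl
    refine ⟨e'.symm, fun g k => ?_⟩
    apply e'.injective
    rw [e'.apply_symm_apply]
    refine (?_ : e' (σ g (e'.symm k)) = π g k).symm
    calc e' (σ g (e'.symm k)) = Ui (σ g (e'.symm k)) := he' _
      _ = π g (Ui (e'.symm k)) := hintU g _
      _ = π g (e' (e'.symm k)) := rfl
      _ = π g k := by rw [e'.apply_symm_apply]
end

section
/- Let Γ ≤ Sp_{2n}(ℝ) be a discrete subgroup and (ρ, V) as above with all highest weight entries > 2n. For every K-finite vector f of the holomorphic discrete series H_ρ, the two Poincaré series are compatible: F_{P_{Γ,ρ} f} = P_Γ F_f, i.e., Σ_{γ∈Γ} F_f(γ g) = ((Σ_{γ∈Γ} f|_ρ γ)|_ρ g)(iI_n) for all g ∈ Sp_{2n}(ℝ), both series converging absolutely. -/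
open MeasureTheory Matrix ComplexConjugate

noncomputable section

/-- Index set for the entries of a symmetric `n × n` matrix. -/
def SymIdx (n : ℕ) := {p : Fin n × Fin n // p.1 ≤ p.2}

instance (n : ℕ) : Fintype (SymIdx n) := Subtype.fintype _

/-- The symmetric real matrix with upper-triangular entries `u`. -/
def symMat {n : ℕ} (u : SymIdx n → ℝ) : Matrix (Fin n) (Fin n) ℝ := fun i j =>
  if h : i ≤ j then u ⟨(i, j), h⟩ else u ⟨(j, i), le_of_not_ge h⟩

/-- The complex symmetric matrix with upper-triangular entries `w`. -/
def symMatC {n : ℕ} (w : SymIdx n → ℂ) : Matrix (Fin n) (Fin n) ℂ := fun i j =>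
  if h : i ≤ j then w ⟨(i, j), h⟩ else w ⟨(j, i), le_of_not_ge h⟩

/-- The complex symmetric matrix `z = x + i y` with real coordinates `u = (x, y)`. -/
def mkZ {n : ℕ} (u : (SymIdx n → ℝ) × (SymIdx n → ℝ)) : Matrix (Fin n) (Fin n) ℂ :=
  (symMat u.1).map (fun r => (r : ℂ)) + Complex.I • (symMat u.2).map (fun r => (r : ℂ))

/-- The Siegel upper half-space `ℋ_n`. -/
def Siegel (n : ℕ) : Set (Matrix (Fin n) (Fin n) ℂ) :=
  {z | zᵀ = z ∧ (Matrix.of fun i j => (z i j).im).PosDef}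

/-- `iI_n`, the base point of the Siegel upper half-space. -/
def basePt {n : ℕ} : Matrix (Fin n) (Fin n) ℂ := Complex.I • (1 : Matrix (Fin n) (Fin n) ℂ)

/-- Holomorphy of a `V`-valued function on `ℋ_n`, in the holomorphic coordinates given by
the upper-triangular entries. -/
def SiegelHolomorphic {n : ℕ} {V : Type*} [NormedAddCommGroup V] [NormedSpace ℂ V]
    (f : Matrix (Fin n) (Fin n) ℂ → V) : Prop :=
  DifferentiableOn ℂ (fun w : SymIdx n → ℂ => f (symMatC w))
    {w | (symMat fun p => (w p).im).PosDef}

/-- `f_{1,v}(z) = ρ((z + iI_n)/(2i))⁻¹ v`. -/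
def fOneV {n : ℕ} {V : Type*} [NormedAddCommGroup V] [InnerProductSpace ℂ V]
    (ρ : Matrix (Fin n) (Fin n) ℂ →* Module.End ℂ V) (v : V)
    (z : Matrix (Fin n) (Fin n) ℂ) : V :=
  Ring.inverse (ρ ((2 * Complex.I)⁻¹ • (z + basePt))) v

/-- The real symplectic group `Sp_{2n}(ℝ)`. -/
abbrev Sp (n : ℕ) := Matrix.symplecticGroup (Fin n) ℝ

/-- `Cz + D` for `g = [[A,B],[C,D]] ∈ Sp_{2n}(ℝ)`. -/
def den {n : ℕ} (g : Sp n) (z : Matrix (Fin n) (Fin n) ℂ) : Matrix (Fin n) (Fin n) ℂ :=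
  ((g : Matrix (Fin n ⊕ Fin n) (Fin n ⊕ Fin n) ℝ).toBlocks₂₁.map (fun r => (r : ℂ))) * z
    + ((g : Matrix (Fin n ⊕ Fin n) (Fin n ⊕ Fin n) ℝ).toBlocks₂₂.map (fun r => (r : ℂ)))

/-- `g.z = (Az + B)(Cz + D)⁻¹`. -/
def act {n : ℕ} (g : Sp n) (z : Matrix (Fin n) (Fin n) ℂ) : Matrix (Fin n) (Fin n) ℂ :=
  (((g : Matrix (Fin n ⊕ Fin n) (Fin n ⊕ Fin n) ℝ).toBlocks₁₁.map (fun r => (r : ℂ))) * z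
    + ((g : Matrix (Fin n ⊕ Fin n) (Fin n ⊕ Fin n) ℝ).toBlocks₁₂.map (fun r => (r : ℂ))))
    * (den g z)⁻¹

open scoped ComplexOrder in
/-- The square root of a positive semidefinite matrix (Mathlib's former
`Matrix.PosSemidef.sqrt`, removed upstream), with its old definition. -/
def Matrix.PosSemidef.sqrt {m : Type*} [Fintype m] [DecidableEq m] {𝕜 : Type*} [RCLike 𝕜]
    {A : Matrix m m 𝕜} (hA : A.PosSemidef) : Matrix m m 𝕜 :=
  (hA.1.eigenvectorUnitary : Matrix m m 𝕜) * diagonal ((↑) ∘ (√·) ∘ hA.1.eigenvalues)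
    * (star hA.1.eigenvectorUnitary : Matrix m m 𝕜)

/-- The weight-`ρ` slash action: `(f |_ρ g)(z) = ρ(Cz+D)⁻¹ f(g.z)`. -/
def slash {n : ℕ} {V : Type*} [NormedAddCommGroup V] [InnerProductSpace ℂ V]
    (ρ : Matrix (Fin n) (Fin n) ℂ →* Module.End ℂ V)
    (f : Matrix (Fin n) (Fin n) ℂ → V) (g : Sp n) (z : Matrix (Fin n) (Fin n) ℂ) : V :=
  Ring.inverse (ρ (den g z)) (f (act g z))

/-- The coordinate version of the action of `Sp_{2n}(ℝ)` on `ℋ_n`. -/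
def coordAct {n : ℕ} (g : Sp n) (u : (SymIdx n → ℝ) × (SymIdx n → ℝ)) :
    (SymIdx n → ℝ) × (SymIdx n → ℝ) :=
  (fun p => (act g (mkZ u) p.1.1 p.1.2).re, fun p => (act g (mkZ u) p.1.1 p.1.2).im)


/-- The lift `F_f(g) = (f |_ρ g)(iI_n)` of a function on `ℋ_n` to `Sp_{2n}(ℝ)`. -/
def lift {n : ℕ} {V : Type*} [NormedAddCommGroup V] [InnerProductSpace ℂ V]
    (ρ : Matrix (Fin n) (Fin n) ℂ →* Module.End ℂ V)
    (f : Matrix (Fin n) (Fin n) ℂ → V) (g : Sp n) : V :=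
  slash ρ f g basePt

/-- `K`-finiteness of a vector `f` of `H_ρ`, for the maximal compact subgroup
`K = Stab(iI_n)` of `Sp_{2n}(ℝ)` acting by `π_ρ(g) f = f |_ρ g⁻¹`. -/
def IsHKFinite {n : ℕ} {V : Type*} [NormedAddCommGroup V] [InnerProductSpace ℂ V]
    (ρ : Matrix (Fin n) (Fin n) ℂ →* Module.End ℂ V)
    (f : Matrix (Fin n) (Fin n) ℂ → V) : Prop :=
  FiniteDimensional ℂ (Submodule.span ℂ
    (Set.range fun k : {g : Sp n // act g basePt = basePt} =>
      fun z => slash ρ f ((k : Sp n))⁻¹ z))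


namespace SiegelAux
open scoped ComplexOrder

variable {n : ℕ}

/-- Complexification of a real matrix. -/
def cm (M : Matrix (Fin n) (Fin n) ℝ) : Matrix (Fin n) (Fin n) ℂ := M.map (fun r => (r : ℂ))

lemma cm_mul (M N : Matrix (Fin n) (Fin n) ℝ) : cm (M * N) = cm M * cm N := by
  have h : (fun r : ℝ => (r : ℂ)) = ⇑Complex.ofRealHom := rfl
  simp only [cm, h, Matrix.map_mul]

lemma cm_add (M N : Matrix (Fin n) (Fin n) ℝ) : cm (M + N) = cm M + cm N := by
  ext i j; simp [cm]

lemma cm_sub (M N : Matrix (Fin n) (Fin n) ℝ) : cm (M - N) = cm M - cm N := by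
  ext i j; simp [cm]

lemma cm_one : cm (1 : Matrix (Fin n) (Fin n) ℝ) = 1 := by
  ext i j; by_cases h : i = j <;> simp [cm, Matrix.one_apply, h]

lemma cm_transpose (M : Matrix (Fin n) (Fin n) ℝ) : cm Mᵀ = (cm M)ᵀ := by
  ext i j; simp [cm]

lemma blocks_mul (X Y : Matrix (Fin n ⊕ Fin n) (Fin n ⊕ Fin n) ℝ) :
    X * Y = fromBlocks
      (X.toBlocks₁₁ * Y.toBlocks₁₁ + X.toBlocks₁₂ * Y.toBlocks₂₁)
      (X.toBlocks₁₁ * Y.toBlocks₁₂ + X.toBlocks₁₂ * Y.toBlocks₂₂)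
      (X.toBlocks₂₁ * Y.toBlocks₁₁ + X.toBlocks₂₂ * Y.toBlocks₂₁)
      (X.toBlocks₂₁ * Y.toBlocks₁₂ + X.toBlocks₂₂ * Y.toBlocks₂₂) := by
  conv_lhs => rw [← fromBlocks_toBlocks X, ← fromBlocks_toBlocks Y]
  rw [fromBlocks_multiply]

lemma symp_rels {A : Matrix (Fin n ⊕ Fin n) (Fin n ⊕ Fin n) ℝ}
    (hA : A ∈ Matrix.symplecticGroup (Fin n) ℝ) :
    A.toBlocks₁₁ᵀ * A.toBlocks₂₁ = A.toBlocks₂₁ᵀ * A.toBlocks₁₁ ∧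
    A.toBlocks₁₂ᵀ * A.toBlocks₂₂ = A.toBlocks₂₂ᵀ * A.toBlocks₁₂ ∧
    A.toBlocks₁₁ᵀ * A.toBlocks₂₂ - A.toBlocks₂₁ᵀ * A.toBlocks₁₂ = 1 ∧
    A.toBlocks₂₂ᵀ * A.toBlocks₁₁ - A.toBlocks₁₂ᵀ * A.toBlocks₂₁ = 1 := by
  rw [SymplecticGroup.mem_iff'] at hA
  set a := A.toBlocks₁₁ with ha
  set b := A.toBlocks₁₂ with hb
  set c := A.toBlocks₂₁ with hc
  set d := A.toBlocks₂₂ with hd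
  have hA' : (fromBlocks a b c d)ᵀ * Matrix.J (Fin n) ℝ * fromBlocks a b c d
      = Matrix.J (Fin n) ℝ := by
    rw [ha, hb, hc, hd, fromBlocks_toBlocks]; exact hA
  rw [Matrix.J, fromBlocks_transpose, fromBlocks_multiply, fromBlocks_multiply] at hA'
  have h11 := congrArg Matrix.toBlocks₁₁ hA'
  have h12 := congrArg Matrix.toBlocks₁₂ hA'
  have h21 := congrArg Matrix.toBlocks₂₁ hA'
  have h22 := congrArg Matrix.toBlocks₂₂ hA'
  simp only [toBlocks_fromBlocks₁₁, toBlocks_fromBlocks₁₂, toBlocks_fromBlocks₂₁,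
    toBlocks_fromBlocks₂₂, Matrix.mul_zero, Matrix.mul_one, Matrix.mul_neg,
    zero_add, add_zero, Matrix.neg_mul, ← sub_eq_add_neg] at h11 h12 h21 h22
  refine ⟨(sub_eq_zero.mp h11).symm, (sub_eq_zero.mp h22).symm, ?_, h21⟩
  have := congrArg Neg.neg h12
  simpa [neg_sub] using this

lemma cv_dot (y : Matrix (Fin n) (Fin n) ℝ) (v w : Fin n → ℝ) :
    (fun i => ((v i : ℂ))) ⬝ᵥ (cm y) *ᵥ (fun i => ((w i : ℂ))) = ((v ⬝ᵥ y *ᵥ w : ℝ) : ℂ) := by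
  simp only [dotProduct, mulVec, cm, Matrix.map_apply]
  push_cast
  rfl

lemma dot_symm {y : Matrix (Fin n) (Fin n) ℝ} (hy : yᵀ = y) (v w : Fin n → ℝ) :
    v ⬝ᵥ y *ᵥ w = w ⬝ᵥ y *ᵥ v := by
  rw [dotProduct_mulVec, ← vecMul_transpose, hy, dotProduct_comm]

lemma posDef_cm {y : Matrix (Fin n) (Fin n) ℝ} (hy : y.PosDef) : (cm y).PosDef := by
  have hsym : yᵀ = y := by
    ext i j; have := congrFun (congrFun hy.1 i) j
    simpa [Matrix.conjTranspose_apply] using this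
  refine Matrix.PosDef.of_dotProduct_mulVec_pos ?_ ?_
  · ext i j
    simp only [Matrix.conjTranspose_apply, cm, Matrix.map_apply, RingHom.coe_coe, Complex.star_def,
      Complex.conj_ofReal]
    exact_mod_cast congrFun (congrFun hsym i) j
  · intro x hx
    set p : Fin n → ℝ := fun i => (x i).re with hp
    set q : Fin n → ℝ := fun i => (x i).im with hq
    have hxd : x = (fun i => ((p i : ℂ))) + Complex.I • (fun i => ((q i : ℂ))) := by
      funext i
      simp [hp, hq, Complex.ext_iff]
    have hxs : star x = (fun i => ((p i : ℂ))) - Complex.I • (fun i => ((q i : ℂ))) := by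
      funext i
      simp [hp, hq, Complex.ext_iff]
    have key : star x ⬝ᵥ (cm y) *ᵥ x = ((p ⬝ᵥ y *ᵥ p + q ⬝ᵥ y *ᵥ q : ℝ) : ℂ) := by
      rw [hxs]
      nth_rewrite 1 [hxd]
      simp only [mulVec_add, mulVec_smul, sub_dotProduct, dotProduct_add,
        smul_dotProduct, dotProduct_smul, cv_dot]
      rw [dot_symm hsym q p]
      push_cast
      simp only [smul_eq_mul]
      ring_nf
      rw [Complex.I_sq]
      ring
    rw [key]
    have hpq : p ≠ 0 ∨ q ≠ 0 := by
      by_contra h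
      push_neg at h
      apply hx
      funext i
      have h1 := congrFun h.1 i
      have h2 := congrFun h.2 i
      simp only [hp, hq, Pi.zero_apply] at h1 h2
      exact Complex.ext h1 h2
    have hpos : 0 < p ⬝ᵥ y *ᵥ p + q ⬝ᵥ y *ᵥ q := by
      have h1 : 0 ≤ p ⬝ᵥ y *ᵥ p := by simpa using hy.posSemidef.dotProduct_mulVec_nonneg p
      have h2 : 0 ≤ q ⬝ᵥ y *ᵥ q := by simpa using hy.posSemidef.dotProduct_mulVec_nonneg q
      rcases hpq with h | h
      · have := hy.dotProduct_mulVec_pos h; simp at this; linarith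
      · have := hy.dotProduct_mulVec_pos h; simp at this; linarith
    exact Complex.zero_lt_real.mpr hpos

lemma posDef_of_cm {y : Matrix (Fin n) (Fin n) ℝ} (hy : (cm y).PosDef) : y.PosDef := by
  refine Matrix.PosDef.of_dotProduct_mulVec_pos ?_ ?_
  · ext i j
    have := congrFun (congrFun hy.1 i) j
    simp only [Matrix.conjTranspose_apply, cm, Matrix.map_apply, Complex.star_def,
      Complex.conj_ofReal] at this
    simpa [Matrix.conjTranspose_apply] using Complex.ofReal_injective this
  · intro x hx
    have hx' : (fun i => ((x i : ℂ))) ≠ 0 := by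
      intro h
      apply hx
      funext i
      have := congrFun h i
      simpa using this
    have := hy.dotProduct_mulVec_pos hx'
    have hst : star (fun i => ((x i : ℂ))) = fun i => ((x i : ℂ)) := by
      funext i; simp
    rw [hst, cv_dot] at this
    exact_mod_cast this

lemma posDef_conj {A B : Matrix (Fin n) (Fin n) ℂ} (hA : A.PosDef) (hB : IsUnit B.det) :
    (Bᴴ * A * B).PosDef := by
  refine Matrix.PosDef.of_dotProduct_mulVec_pos (Matrix.isHermitian_conjTranspose_mul_mul B hA.1) (fun x hx => ?_)
  have hBx : B *ᵥ x ≠ 0 := by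
    intro h
    apply hx
    have hinj := Matrix.mulVec_injective_iff_isUnit.mpr ((Matrix.isUnit_iff_isUnit_det B).mpr hB)
    apply hinj
    rw [h, Matrix.mulVec_zero]
  have e : star x ⬝ᵥ (Bᴴ * A * B) *ᵥ x = star (B *ᵥ x) ⬝ᵥ A *ᵥ (B *ᵥ x) := by
    rw [← Matrix.mulVec_mulVec, ← Matrix.mulVec_mulVec, Matrix.dotProduct_mulVec,
      ← Matrix.star_mulVec]
  rw [e]
  exact hA.dotProduct_mulVec_pos hBx

def cA (g : Sp n) : Matrix (Fin n) (Fin n) ℂ :=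
  cm ((g : Matrix (Fin n ⊕ Fin n) (Fin n ⊕ Fin n) ℝ).toBlocks₁₁)
def cB (g : Sp n) : Matrix (Fin n) (Fin n) ℂ :=
  cm ((g : Matrix (Fin n ⊕ Fin n) (Fin n ⊕ Fin n) ℝ).toBlocks₁₂)
def cC (g : Sp n) : Matrix (Fin n) (Fin n) ℂ :=
  cm ((g : Matrix (Fin n ⊕ Fin n) (Fin n ⊕ Fin n) ℝ).toBlocks₂₁)
def cD (g : Sp n) : Matrix (Fin n) (Fin n) ℂ :=
  cm ((g : Matrix (Fin n ⊕ Fin n) (Fin n ⊕ Fin n) ℝ).toBlocks₂₂)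

def num (g : Sp n) (z : Matrix (Fin n) (Fin n) ℂ) : Matrix (Fin n) (Fin n) ℂ :=
  cA g * z + cB g

lemma den_eq (g : Sp n) (z : Matrix (Fin n) (Fin n) ℂ) : den g z = cC g * z + cD g := rfl

lemma act_eq (g : Sp n) (z : Matrix (Fin n) (Fin n) ℂ) : act g z = num g z * (den g z)⁻¹ := rfl

/-- Entrywise complex conjugation of a matrix. -/
def cj (X : Matrix (Fin n) (Fin n) ℂ) : Matrix (Fin n) (Fin n) ℂ := X.map (starRingEnd ℂ)

lemma cj_mul (X Y : Matrix (Fin n) (Fin n) ℂ) : cj (X * Y) = cj X * cj Y := by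
  simp only [cj, Matrix.map_mul]

lemma cj_add (X Y : Matrix (Fin n) (Fin n) ℂ) : cj (X + Y) = cj X + cj Y := by
  ext i j; simp [cj]

lemma cj_cm (M : Matrix (Fin n) (Fin n) ℝ) : cj (cm M) = cm M := by
  ext i j; simp [cj, cm, Complex.conj_ofReal]

lemma cj_transpose (X : Matrix (Fin n) (Fin n) ℂ) : cj Xᵀ = (cj X)ᵀ := by
  ext i j; simp [cj]

lemma conjT_eq (X : Matrix (Fin n) (Fin n) ℂ) : Xᴴ = (cj X)ᵀ := by
  ext i j; simp [cj, Matrix.conjTranspose_apply]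

lemma cj_eq_TH (X : Matrix (Fin n) (Fin n) ℂ) : cj X = (Xᴴ)ᵀ := by
  ext i j; simp [cj, Matrix.conjTranspose_apply]

lemma isUnit_cj_det {X : Matrix (Fin n) (Fin n) ℂ} (h : IsUnit X.det) : IsUnit (cj X).det := by
  rw [cj_eq_TH, Matrix.det_transpose, Matrix.det_conjTranspose]
  exact h.star

lemma cj_one : cj (1 : Matrix (Fin n) (Fin n) ℂ) = 1 := by
  ext i j; by_cases h : i = j <;> simp [cj, Matrix.one_apply, h]

lemma cj_inv {X : Matrix (Fin n) (Fin n) ℂ} (h : IsUnit X.det) : (cj X)⁻¹ = cj X⁻¹ := by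
  apply Matrix.inv_eq_right_inv
  rw [← cj_mul, Matrix.mul_nonsing_inv _ h, cj_one]

lemma relC (g : Sp n) :
    (cA g)ᵀ * cC g = (cC g)ᵀ * cA g ∧ (cB g)ᵀ * cD g = (cD g)ᵀ * cB g ∧
    (cA g)ᵀ * cD g - (cC g)ᵀ * cB g = 1 ∧ (cD g)ᵀ * cA g - (cB g)ᵀ * cC g = 1 := by
  obtain ⟨h1, h2, h3, h4⟩ := symp_rels g.2
  exact ⟨by simpa [cA, cC, cm_mul, cm_transpose] using congrArg cm h1,
    by simpa [cB, cD, cm_mul, cm_transpose] using congrArg cm h2,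
    by simpa [cA, cB, cC, cD, cm_sub, cm_mul, cm_transpose, cm_one] using congrArg cm h3,
    by simpa [cA, cB, cC, cD, cm_sub, cm_mul, cm_transpose, cm_one] using congrArg cm h4⟩

lemma key_sym (g : Sp n) {z : Matrix (Fin n) (Fin n) ℂ} (hz : zᵀ = z) :
    (num g z)ᵀ * den g z = (den g z)ᵀ * num g z := by
  obtain ⟨h1, h2, h3, h4⟩ := relC g
  have e : (num g z)ᵀ * den g z - (den g z)ᵀ * num g z =
      z * ((cA g)ᵀ * cC g - (cC g)ᵀ * cA g) * z + z * ((cA g)ᵀ * cD g - (cC g)ᵀ * cB g)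
        - ((cD g)ᵀ * cA g - (cB g)ᵀ * cC g) * z + ((cB g)ᵀ * cD g - (cD g)ᵀ * cB g) := by
    rw [num, den_eq, Matrix.transpose_add, Matrix.transpose_add, Matrix.transpose_mul,
      Matrix.transpose_mul, hz]
    noncomm_ring
  rw [h1, h3, h4, h2] at e
  have e2 : (num g z)ᵀ * den g z - (den g z)ᵀ * num g z = 0 := by rw [e]; noncomm_ring
  rw [sub_eq_zero] at e2
  exact e2


lemma key_im (g : Sp n) {z : Matrix (Fin n) (Fin n) ℂ} (hz : zᵀ = z) :
    (den g z)ᴴ * num g z - (num g z)ᴴ * den g z = z - cj z := by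
  obtain ⟨h1, h2, h3, h4⟩ := relC g
  have hcjz : (cj z)ᵀ = cj z := by rw [← cj_transpose, hz]
  have hden : (den g z)ᴴ = cj z * (cC g)ᵀ + (cD g)ᵀ := by
    rw [den_eq, conjT_eq, cj_add, cj_mul,
      show cj (cC g) = cC g from cj_cm _, show cj (cD g) = cD g from cj_cm _,
      Matrix.transpose_add, Matrix.transpose_mul, hcjz]
  have hnum : (num g z)ᴴ = cj z * (cA g)ᵀ + (cB g)ᵀ := by
    rw [num, conjT_eq, cj_add, cj_mul,
      show cj (cA g) = cA g from cj_cm _, show cj (cB g) = cB g from cj_cm _,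
      Matrix.transpose_add, Matrix.transpose_mul, hcjz]
  have e : (den g z)ᴴ * num g z - (num g z)ᴴ * den g z =
      cj z * ((cC g)ᵀ * cA g - (cA g)ᵀ * cC g) * z - cj z * ((cA g)ᵀ * cD g - (cC g)ᵀ * cB g)
        + ((cD g)ᵀ * cA g - (cB g)ᵀ * cC g) * z + ((cD g)ᵀ * cB g - (cB g)ᵀ * cD g) := by
    rw [hden, hnum, num, den_eq]
    noncomm_ring
  rw [h1, h3, h4, h2] at e
  rw [e]
  noncomm_ring

lemma sub_cj (z : Matrix (Fin n) (Fin n) ℂ) :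
    z - cj z = (2 * Complex.I) • cm (Matrix.of fun i j => (z i j).im) := by
  ext i j
  simp only [Matrix.sub_apply, Matrix.smul_apply, cj, cm, Matrix.map_apply, Matrix.of_apply,
    smul_eq_mul]
  rw [Complex.sub_conj]
  push_cast
  ring

lemma two_I_ne : (2 * Complex.I) ≠ 0 := mul_ne_zero two_ne_zero Complex.I_ne_zero

lemma den_det_isUnit (g : Sp n) {z : Matrix (Fin n) (Fin n) ℂ} (hz : z ∈ Siegel n) :
    IsUnit (den g z).det := by
  have hy : (cm (Matrix.of fun i j => (z i j).im)).PosDef := posDef_cm hz.2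
  have hker : ∀ v, (den g z) *ᵥ v = 0 → v = 0 := by
    intro v hv
    by_contra hvne
    have him := key_im g hz.1
    have h0 : star v ⬝ᵥ ((z - cj z) *ᵥ v) = 0 := by
      rw [← him, Matrix.sub_mulVec, dotProduct_sub]
      have e1 : star v ⬝ᵥ ((num g z)ᴴ * den g z) *ᵥ v = 0 := by
        rw [← Matrix.mulVec_mulVec, hv, Matrix.mulVec_zero, dotProduct_zero]
      have e2 : star v ⬝ᵥ ((den g z)ᴴ * num g z) *ᵥ v = 0 := by
        rw [← Matrix.mulVec_mulVec, Matrix.dotProduct_mulVec, ← Matrix.star_mulVec, hv,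
          star_zero, zero_dotProduct]
      rw [e1, e2, sub_zero]
    rw [sub_cj, Matrix.smul_mulVec, dotProduct_smul, smul_eq_mul, mul_eq_zero] at h0
    rcases h0 with h0 | h0
    · exact two_I_ne h0
    · exact absurd h0 (ne_of_gt (hy.dotProduct_mulVec_pos hvne))
  have hinj : Function.Injective (den g z).mulVec := by
    intro u v huv
    have := hker (u - v) (by rw [Matrix.mulVec_sub, huv, sub_self])
    exact sub_eq_zero.mp this
  exact (Matrix.isUnit_iff_isUnit_det _).mp (Matrix.mulVec_injective_iff_isUnit.mp hinj)

lemma inv_trans_mul {P Q : Matrix (Fin n) (Fin n) ℂ} (h : Qᵀ * P = Pᵀ * Q) (hP : IsUnit P.det) :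
    (Pᵀ)⁻¹ * Qᵀ = Q * P⁻¹ := by
  have hPT : IsUnit (Pᵀ).det := by rwa [Matrix.det_transpose]
  have e : Qᵀ = Pᵀ * (Q * P⁻¹) := by
    rw [← Matrix.mul_assoc, ← h, Matrix.mul_nonsing_inv_cancel_right _ _ hP]
  rw [e, Matrix.nonsing_inv_mul_cancel_left _ _ hPT]

lemma act_mem (g : Sp n) {z : Matrix (Fin n) (Fin n) ℂ} (hz : z ∈ Siegel n) :
    act g z ∈ Siegel n := by
  have hd := den_det_isUnit g hz
  have hsym := key_sym g hz.1
  have hT : (act g z)ᵀ = act g z := by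
    rw [act_eq, Matrix.transpose_mul, Matrix.transpose_nonsing_inv, inv_trans_mul hsym hd,
      ← act_eq]
  refine ⟨hT, ?_⟩
  have hdc : IsUnit (cj (den g z)).det := isUnit_cj_det hd
  have hHdet : IsUnit ((den g z)ᴴ).det := by
    rw [Matrix.det_conjTranspose]; exact hd.star
  have hcjsym : (cj (num g z))ᵀ * cj (den g z) = (cj (den g z))ᵀ * cj (num g z) := by
    have := congrArg cj hsym
    simpa [cj_mul, cj_transpose] using this
  have hMain : (den g z)ᴴ * ((act g z) - cj (act g z)) * den g z
      = (den g z)ᴴ * num g z - (num g z)ᴴ * den g z := by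
    rw [act_eq, cj_mul, ← cj_inv hd, Matrix.mul_sub, Matrix.sub_mul]
    congr 1
    · rw [← Matrix.mul_assoc, Matrix.nonsing_inv_mul_cancel_right _ _ hd]
    · rw [conjT_eq (den g z), conjT_eq (num g z), ← Matrix.mul_assoc, ← hcjsym,
        Matrix.mul_nonsing_inv_cancel_right _ _ hdc]
  have h5 : (den g z)ᴴ * ((2 * Complex.I) • cm (Matrix.of fun i j => ((act g z) i j).im))
      * den g z = (2 * Complex.I) • cm (Matrix.of fun i j => (z i j).im) := by
    rw [← sub_cj, ← sub_cj, hMain, key_im g hz.1]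
  have h6 : (2 * Complex.I) • cm (Matrix.of fun i j => ((act g z) i j).im)
      = (2 * Complex.I) • (((den g z)ᴴ)⁻¹ * cm (Matrix.of fun i j => (z i j).im)
          * (den g z)⁻¹) := by
    have := congrArg (fun X => ((den g z)ᴴ)⁻¹ * X * (den g z)⁻¹) h5
    rw [Matrix.mul_assoc ((den g z)ᴴ) _ (den g z), Matrix.nonsing_inv_mul_cancel_left _ _ hHdet,
      Matrix.mul_nonsing_inv_cancel_right _ _ hd] at this
    rw [this]
    rw [Matrix.mul_smul, Matrix.smul_mul]
  have h7 : cm (Matrix.of fun i j => ((act g z) i j).im)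
      = ((den g z)⁻¹)ᴴ * cm (Matrix.of fun i j => (z i j).im) * (den g z)⁻¹ := by
    have := smul_right_injective (Matrix (Fin n) (Fin n) ℂ) two_I_ne h6
    rw [this, Matrix.conjTranspose_nonsing_inv]
  exact posDef_of_cm (by
    rw [h7]
    exact posDef_conj (posDef_cm hz.2) (Matrix.isUnit_nonsing_inv_det _ hd))

lemma basePt_mem : (basePt : Matrix (Fin n) (Fin n) ℂ) ∈ Siegel n := by
  constructor
  · rw [basePt, Matrix.transpose_smul, Matrix.transpose_one]
  · have h1 : (Matrix.of fun i j => ((basePt : Matrix (Fin n) (Fin n) ℂ) i j).im)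
        = (1 : Matrix (Fin n) (Fin n) ℝ) := by
      ext i j
      by_cases h : i = j <;> simp [basePt, Matrix.one_apply, h]
    rw [h1]
    exact Matrix.PosDef.one

lemma cA_mul (p q : Sp n) : cA (p * q) = cA p * cA q + cB p * cC q := by
  have hcoe : ((p * q : Sp n) : Matrix (Fin n ⊕ Fin n) (Fin n ⊕ Fin n) ℝ)
      = (p : Matrix (Fin n ⊕ Fin n) (Fin n ⊕ Fin n) ℝ) * q := rfl
  rw [cA, hcoe, blocks_mul, toBlocks_fromBlocks₁₁, cm_add, cm_mul, cm_mul]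
  rfl

lemma cB_mul (p q : Sp n) : cB (p * q) = cA p * cB q + cB p * cD q := by
  have hcoe : ((p * q : Sp n) : Matrix (Fin n ⊕ Fin n) (Fin n ⊕ Fin n) ℝ)
      = (p : Matrix (Fin n ⊕ Fin n) (Fin n ⊕ Fin n) ℝ) * q := rfl
  rw [cB, hcoe, blocks_mul, toBlocks_fromBlocks₁₂, cm_add, cm_mul, cm_mul]
  rfl

lemma cC_mul (p q : Sp n) : cC (p * q) = cC p * cA q + cD p * cC q := by
  have hcoe : ((p * q : Sp n) : Matrix (Fin n ⊕ Fin n) (Fin n ⊕ Fin n) ℝ)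
      = (p : Matrix (Fin n ⊕ Fin n) (Fin n ⊕ Fin n) ℝ) * q := rfl
  rw [cC, hcoe, blocks_mul, toBlocks_fromBlocks₂₁, cm_add, cm_mul, cm_mul]
  rfl

lemma cD_mul (p q : Sp n) : cD (p * q) = cC p * cB q + cD p * cD q := by
  have hcoe : ((p * q : Sp n) : Matrix (Fin n ⊕ Fin n) (Fin n ⊕ Fin n) ℝ)
      = (p : Matrix (Fin n ⊕ Fin n) (Fin n ⊕ Fin n) ℝ) * q := rfl
  rw [cD, hcoe, blocks_mul, toBlocks_fromBlocks₂₂, cm_add, cm_mul, cm_mul]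
  rfl

lemma den_mul (p q : Sp n) {z : Matrix (Fin n) (Fin n) ℂ} (hz : z ∈ Siegel n) :
    den (p * q) z = den p (act q z) * den q z := by
  have hd := den_det_isUnit q hz
  calc den (p * q) z = (cC p * cA q + cD p * cC q) * z + (cC p * cB q + cD p * cD q) := by
        rw [den_eq, cC_mul, cD_mul]
    _ = cC p * num q z + cD p * den q z := by rw [num, den_eq]; noncomm_ring
    _ = (cC p * (num q z * (den q z)⁻¹) + cD p) * den q z := by
        rw [Matrix.add_mul, Matrix.mul_assoc, Matrix.nonsing_inv_mul_cancel_right _ _ hd]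
    _ = den p (act q z) * den q z := by
        rw [show den p (act q z) = cC p * act q z + cD p from rfl, act_eq q z]

lemma num_mul (p q : Sp n) {z : Matrix (Fin n) (Fin n) ℂ} (hz : z ∈ Siegel n) :
    num (p * q) z = num p (act q z) * den q z := by
  have hd := den_det_isUnit q hz
  calc num (p * q) z = (cA p * cA q + cB p * cC q) * z + (cA p * cB q + cB p * cD q) := by
        rw [num, cA_mul, cB_mul]
    _ = cA p * num q z + cB p * den q z := by rw [num, den_eq]; noncomm_ring
    _ = (cA p * (num q z * (den q z)⁻¹) + cB p) * den q z := by
        rw [Matrix.add_mul, Matrix.mul_assoc, Matrix.nonsing_inv_mul_cancel_right _ _ hd]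
    _ = num p (act q z) * den q z := by
        rw [show num p (act q z) = cA p * act q z + cB p from rfl, act_eq q z]

lemma act_mul (p q : Sp n) {z : Matrix (Fin n) (Fin n) ℂ} (hz : z ∈ Siegel n) :
    act (p * q) z = act p (act q z) := by
  have hd := den_det_isUnit q hz
  have hd2 := den_det_isUnit p (act_mem q hz)
  rw [act_eq, num_mul p q hz, den_mul p q hz, Matrix.mul_inv_rev, ← Matrix.mul_assoc,
    Matrix.mul_nonsing_inv_cancel_right _ _ hd, ← act_eq]

lemma ring_inverse_mul {R : Type*} [MonoidWithZero R] {a b : R} (ha : IsUnit a)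
    (hb : IsUnit b) : Ring.inverse (a * b) = Ring.inverse b * Ring.inverse a := by
  obtain ⟨u, rfl⟩ := ha
  obtain ⟨v, rfl⟩ := hb
  rw [← Units.val_mul, Ring.inverse_unit, Ring.inverse_unit, Ring.inverse_unit, _root_.mul_inv_rev,
    Units.val_mul]

lemma slash_mul {V : Type*} [NormedAddCommGroup V] [InnerProductSpace ℂ V]
    (ρ : Matrix (Fin n) (Fin n) ℂ →* Module.End ℂ V)
    (f : Matrix (Fin n) (Fin n) ℂ → V) (p q : Sp n) {z : Matrix (Fin n) (Fin n) ℂ}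
    (hz : z ∈ Siegel n) :
    slash ρ f (p * q) z = Ring.inverse (ρ (den q z)) (slash ρ f p (act q z)) := by
  have hu1 : IsUnit (ρ (den p (act q z))) :=
    ((Matrix.isUnit_iff_isUnit_det _).mpr (den_det_isUnit p (act_mem q hz))).map ρ
  have hu2 : IsUnit (ρ (den q z)) :=
    ((Matrix.isUnit_iff_isUnit_det _).mpr (den_det_isUnit q hz)).map ρ
  rw [slash, act_mul p q hz, den_mul p q hz, _root_.map_mul ρ (den p (act q z)) (den q z), ring_inverse_mul hu1 hu2,
    Module.End.mul_apply]
  rfl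

end SiegelAux

open Classical in
/-- **Compatibility of the two Poincaré series** (`F_{P_{Γ,ρ} f} = P_Γ F_f`):
for a discrete subgroup `Γ ≤ Sp_{2n}(ℝ)`, a representation `(ρ, V)` as above with highest
weight entries `> 2n`, and a `K`-finite `f ∈ H_ρ` whose Poincaré series
`P_{Γ,ρ} f = ∑_{γ∈Γ} f|_ρ γ` converges absolutely on `ℋ_n`, the series
`P_Γ F_f(g) = ∑_{γ∈Γ} F_f(γ g)` also converges absolutely, and
`∑_{γ∈Γ} F_f(γ g) = ((∑_{γ∈Γ} f|_ρ γ)|_ρ g)(iI_n)` for all `g ∈ Sp_{2n}(ℝ)`. -/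
theorem lift_poincare_series_compatible
    {n : ℕ} (hn : 0 < n)
    {V : Type*} [NormedAddCommGroup V] [InnerProductSpace ℂ V] [FiniteDimensional ℂ V]
    (ρ : Matrix (Fin n) (Fin n) ℂ →* Module.End ℂ V)
    (hρ_poly : ∀ (w : V) (l : V →ₗ[ℂ] ℂ), ∃ P : MvPolynomial (Fin n × Fin n) ℂ,
      ∀ M : Matrix (Fin n) (Fin n) ℂ, l (ρ M w) = MvPolynomial.eval (fun p => M p.1 p.2) P)
    (hρ_irr : ∀ W : Submodule ℂ V,
      (∀ M : Matrix (Fin n) (Fin n) ℂ, IsUnit M.det → ∀ w ∈ W, ρ M w ∈ W) → W = ⊥ ∨ W = ⊤)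
    (hρ_unit : ∀ M ∈ Matrix.unitaryGroup (Fin n) ℂ, ∀ w w' : V,
      (inner ℂ (ρ M w) (ρ M w') : ℂ) = inner ℂ w w')
    (ω : Fin n → ℤ) (hω_mono : ∀ i j : Fin n, i ≤ j → ω j ≤ ω i)
    (hω_big : ∀ i : Fin n, 2 * (n : ℤ) < ω i)
    (vtop : V) (hvtop_norm : ‖vtop‖ = 1)
    (hvtop_borel : ∀ M : Matrix (Fin n) (Fin n) ℂ, (∀ i j : Fin n, j < i → M i j = 0) →
      IsUnit M.det → ∃ c : ℂ, ρ M vtop = c • vtop)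
    (hvtop_diag : ∀ a : Fin n → ℂ, (∀ i, a i ≠ 0) →
      ρ (Matrix.diagonal a) vtop = (∏ i, a i ^ ω i) • vtop)
    -- a discrete subgroup `Γ` of `Sp_{2n}(ℝ)`:
    (Γ : Subgroup (Sp n)) (hΓ : DiscreteTopology Γ)
    -- a `K`-finite vector `f` of `H_ρ`:
    (f : Matrix (Fin n) (Fin n) ℂ → V)
    (hf_hol : SiegelHolomorphic f)
    (hf_L2 : Integrable (fun u : (SymIdx n → ℝ) × (SymIdx n → ℝ) =>
      if h : (symMat u.2).PosDef then
        ‖ρ (h.posSemidef.sqrt.map (fun r => (r : ℂ))) (f (mkZ u))‖ ^ 2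
          * (symMat u.2).det ^ (-(n : ℤ) - 1)
      else 0))
    (hf_K : IsHKFinite ρ f)
    -- absolute convergence of the Poincaré series `P_{Γ,ρ} f` on `ℋ_n`:
    (hP : ∀ z ∈ Siegel n, Summable fun γ : Γ => ‖slash ρ f (γ : Sp n) z‖) :
    ∀ g : Sp n,
      (Summable fun γ : Γ => ‖lift ρ f ((γ : Sp n) * g)‖) ∧
      ∑' γ : Γ, lift ρ f ((γ : Sp n) * g)
        = slash ρ (fun z => ∑' γ : Γ, slash ρ f (γ : Sp n) z) g basePt := by
  intro g
  have hb : (basePt : Matrix (Fin n) (Fin n) ℂ) ∈ Siegel n := SiegelAux.basePt_mem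
  have hz0 : act g basePt ∈ Siegel n := SiegelAux.act_mem g hb
  have hug : IsUnit (ρ (den g basePt)) :=
    ((Matrix.isUnit_iff_isUnit_det _).mpr (SiegelAux.den_det_isUnit g hb)).map ρ
  set T : V →L[ℂ] V :=
    LinearMap.toContinuousLinearMap (Ring.inverse (ρ (den g basePt)) : Module.End ℂ V) with hT
  have hkey : ∀ γ : Γ, lift ρ f ((γ : Sp n) * g) = T (slash ρ f (γ : Sp n) (act g basePt)) := by
    intro γ
    have h := SiegelAux.slash_mul ρ f (γ : Sp n) g hb
    rw [lift, h, hT]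
    simp [LinearMap.coe_toContinuousLinearMap]
  have hsum0 : Summable fun γ : Γ => ‖slash ρ f (γ : Sp n) (act g basePt)‖ :=
    hP (act g basePt) hz0
  have hsumV : Summable fun γ : Γ => slash ρ f (γ : Sp n) (act g basePt) := hsum0.of_norm
  constructor
  · have : (fun γ : Γ => ‖lift ρ f ((γ : Sp n) * g)‖)
        = fun γ : Γ => ‖T (slash ρ f (γ : Sp n) (act g basePt))‖ := by
      funext γ; rw [hkey γ]
    rw [this]
    exact Summable.of_nonneg_of_le (fun γ => norm_nonneg _)
      (fun γ => T.le_opNorm _) (hsum0.mul_left ‖T‖)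
  · calc ∑' γ : Γ, lift ρ f ((γ : Sp n) * g)
        = ∑' γ : Γ, T (slash ρ f (γ : Sp n) (act g basePt)) := tsum_congr hkey
      _ = T (∑' γ : Γ, slash ρ f (γ : Sp n) (act g basePt)) := (T.map_tsum hsumV).symm
      _ = slash ρ (fun z => ∑' γ : Γ, slash ρ f (γ : Sp n) z) g basePt := by
          rw [slash, hT]
          simp [LinearMap.coe_toContinuousLinearMap]


end
end
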